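/- arXiv:1005.2941 — 14 statements merged into one kernel-verified Lean document; each statement's English description precedes it below -/
import Mathlib

section
/- The integral from 0 to 1 of dx/sqrt(1-x^4) equals Γ(1/4)²/(4·sqrt(2π)). -/
open Real

open MeasureTheory in
theorem stmt_0 :
    ∫ x in (0:ℝ)..1, 1 / Real.sqrt (1 - x ^ 4) =
      Real.Gamma (1 / 4) ^ 2 / (4 * Real.sqrt (2 * Real.pi)) := by
  set g : ℝ → ℝ := fun u => u ^ ((-3:ℝ)/4) * (1 - u) ^ ((-1:ℝ)/2) with hg
  -- Step A: beta integral identification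
  have hA : Complex.betaIntegral (1/4) (1/2) = ((∫ u in (0:ℝ)..1, g u : ℝ) : ℂ) := by
    rw [Complex.betaIntegral, ← intervalIntegral.integral_ofReal]
    refine intervalIntegral.integral_congr fun x hx => ?_
    rw [Set.uIcc_of_le (zero_le_one' ℝ)] at hx
    obtain ⟨hx0, hx1⟩ := hx
    have h1 : ((1:ℂ)/4 - 1) = (((-3:ℝ)/4 : ℝ) : ℂ) := by norm_num
    have h2 : ((1:ℂ)/2 - 1) = (((-1:ℝ)/2 : ℝ) : ℂ) := by norm_num
    have e1 : (x : ℂ) ^ ((1:ℂ)/4 - 1) = ((x ^ ((-3:ℝ)/4) : ℝ) : ℂ) := by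
      rw [h1, Complex.ofReal_cpow hx0]
    have e2 : ((1:ℂ) - x) ^ ((1:ℂ)/2 - 1) = (((1 - x) ^ ((-1:ℝ)/2) : ℝ) : ℂ) := by
      rw [h2, Complex.ofReal_cpow (by linarith)]
      norm_num
    rw [e1, e2, hg]
    push_cast
    ring
  -- Step B: change of variables u = x^4
  have himg : (fun x : ℝ => x ^ 4) '' Set.Ioo 0 1 = Set.Ioo 0 1 := by
    ext y
    constructor
    · rintro ⟨x, ⟨hx0, hx1⟩, rfl⟩
      exact ⟨by positivity, pow_lt_one₀ hx0.le hx1 (by norm_num)⟩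
    · rintro ⟨hy0, hy1⟩
      refine ⟨y ^ ((4:ℝ)⁻¹), ⟨Real.rpow_pos_of_pos hy0 _,
        Real.rpow_lt_one hy0.le hy1 (by norm_num)⟩, ?_⟩
      show (y ^ ((4:ℝ)⁻¹)) ^ 4 = y
      rw [← Real.rpow_natCast (y ^ ((4:ℝ)⁻¹)) 4, ← Real.rpow_mul hy0.le]
      norm_num
  have hderiv : ∀ x ∈ Set.Ioo (0:ℝ) 1,
      HasDerivWithinAt (fun x : ℝ => x ^ 4) (4 * x ^ 3) (Set.Ioo 0 1) x := by
    intro x _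
    simpa using (hasDerivAt_pow 4 x).hasDerivWithinAt
  have hinj : Set.InjOn (fun x : ℝ => x ^ 4) (Set.Ioo 0 1) :=
    (pow_left_strictMonoOn₀ (by norm_num)).injOn.mono fun x hx => le_of_lt hx.1
  have hchg : ∫ u in Set.Ioo (0:ℝ) 1, g u
      = ∫ x in Set.Ioo (0:ℝ) 1, |4 * x ^ 3| • g (x ^ 4) := by
    conv_lhs => rw [← himg]
    exact integral_image_eq_integral_abs_deriv_smul measurableSet_Ioo hderiv hinj g
  have hpt : ∀ x ∈ Set.Ioo (0:ℝ) 1,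
      |4 * x ^ 3| • g (x ^ 4) = 4 * (1 / Real.sqrt (1 - x ^ 4)) := by
    intro x ⟨hx0, hx1⟩
    have hx4 : (0:ℝ) < 1 - x ^ 4 := by
      have := pow_lt_one₀ hx0.le hx1 (show 4 ≠ 0 by norm_num)
      linarith
    have habs : |4 * x ^ 3| = 4 * x ^ 3 := abs_of_pos (by positivity)
    have e1 : (x ^ 4 : ℝ) ^ ((-3:ℝ)/4) = (x ^ 3)⁻¹ := by
      rw [← Real.rpow_natCast x 4, ← Real.rpow_mul hx0.le]
      norm_num
    have e2 : (1 - x ^ 4 : ℝ) ^ ((-1:ℝ)/2) = 1 / Real.sqrt (1 - x ^ 4) := by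
      rw [show ((-1:ℝ)/2) = -(1/2) by norm_num, Real.rpow_neg hx4.le,
        Real.sqrt_eq_rpow]
      norm_num
    rw [smul_eq_mul, habs, hg]
    simp only []
    rw [e1, e2]
    have hx3 : x ^ 3 ≠ 0 := by positivity
    field_simp
  have hB : ∫ x in (0:ℝ)..1, 1 / Real.sqrt (1 - x ^ 4)
      = (1/4) * ∫ u in (0:ℝ)..1, g u := by
    rw [intervalIntegral.integral_of_le (zero_le_one' ℝ),
      intervalIntegral.integral_of_le (zero_le_one' ℝ),
      integral_Ioc_eq_integral_Ioo, integral_Ioc_eq_integral_Ioo, hchg,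
      setIntegral_congr_fun measurableSet_Ioo hpt, integral_const_mul]
    ring
  -- Step C: evaluate via Gamma
  have hGam := Complex.Gamma_mul_Gamma_eq_betaIntegral
    (s := 1/4) (t := 1/2) (by norm_num) (by norm_num)
  rw [show (1:ℂ)/4 + 1/2 = 3/4 by norm_num, hA] at hGam
  have c14 : ((1:ℂ)/4) = (((1:ℝ)/4 : ℝ) : ℂ) := by norm_num
  have c12 : ((1:ℂ)/2) = (((1:ℝ)/2 : ℝ) : ℂ) := by norm_num
  have c34 : ((3:ℂ)/4) = (((3:ℝ)/4 : ℝ) : ℂ) := by norm_num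
  rw [c14, c12, c34, Complex.Gamma_ofReal, Complex.Gamma_ofReal,
    Complex.Gamma_ofReal, ← Complex.ofReal_mul, ← Complex.ofReal_mul] at hGam
  have hreal : Real.Gamma (1/4) * Real.Gamma (1/2)
      = Real.Gamma (3/4) * ∫ u in (0:ℝ)..1, g u := by
    exact_mod_cast hGam
  have hrefl : Real.Gamma (1/4) * Real.Gamma (3/4) = π / (Real.sqrt 2 / 2) := by
    have h := Real.Gamma_mul_Gamma_one_sub (1/4)
    rw [show (1:ℝ) - 1/4 = 3/4 by norm_num, show π * (1/4) = π/4 by ring,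
      Real.sin_pi_div_four] at h
    exact h
  have hhalf : Real.Gamma (1/2) = Real.sqrt π := Real.Gamma_one_half_eq
  have ha : 0 < Real.Gamma (1/4) := Real.Gamma_pos_of_pos (by norm_num)
  have hb : 0 < Real.Gamma (3/4) := Real.Gamma_pos_of_pos (by norm_num)
  have hπ : (0:ℝ) < π := Real.pi_pos
  have hsqrtπ : (0:ℝ) < Real.sqrt π := Real.sqrt_pos.mpr hπ
  have hsqrt2 : (0:ℝ) < Real.sqrt 2 := by positivity
  have hs2π : Real.sqrt (2 * π) = Real.sqrt 2 * Real.sqrt π :=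
    Real.sqrt_mul (by norm_num) π
  have hππ : Real.sqrt π * Real.sqrt π = π := Real.mul_self_sqrt hπ.le
  have h22 : Real.sqrt 2 * Real.sqrt 2 = 2 := Real.mul_self_sqrt (by norm_num)
  rw [hhalf] at hreal
  -- conclude
  rw [hB, hs2π]
  rw [eq_div_iff (by positivity)] at hrefl
  set I : ℝ := ∫ u in (0:ℝ)..1, g u with hI
  have h1 : Real.Gamma (1/4) ^ 2 * Real.sqrt π * (Real.sqrt 2 / 2)
      = Real.sqrt π * Real.sqrt π * I := by
    calc Real.Gamma (1/4) ^ 2 * Real.sqrt π * (Real.sqrt 2 / 2)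
        = (Real.Gamma (1/4) * Real.sqrt π) * (Real.Gamma (1/4) * (Real.sqrt 2 / 2)) := by ring
      _ = (Real.Gamma (3/4) * I) * (Real.Gamma (1/4) * (Real.sqrt 2 / 2)) := by rw [hreal]
      _ = (Real.Gamma (1/4) * Real.Gamma (3/4) * (Real.sqrt 2 / 2)) * I := by ring
      _ = π * I := by rw [hrefl]
      _ = Real.sqrt π * Real.sqrt π * I := by rw [hππ]
  have key : I = Real.Gamma (1/4) ^ 2 / (Real.sqrt 2 * Real.sqrt π) := by
    rw [eq_div_iff (by positivity)]
    have h2 : Real.sqrt π * (I * (Real.sqrt 2 * Real.sqrt π))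
        = Real.sqrt π * Real.Gamma (1/4) ^ 2 := by
      calc Real.sqrt π * (I * (Real.sqrt 2 * Real.sqrt π))
          = (Real.sqrt π * Real.sqrt π * I) * Real.sqrt 2 := by ring
        _ = (Real.Gamma (1/4) ^ 2 * Real.sqrt π * (Real.sqrt 2 / 2)) * Real.sqrt 2 := by
            rw [← h1]
        _ = Real.Gamma (1/4) ^ 2 * Real.sqrt π * ((Real.sqrt 2 * Real.sqrt 2) / 2) := by ring
        _ = Real.sqrt π * Real.Gamma (1/4) ^ 2 := by rw [h22]; ring
    exact mul_left_cancel₀ hsqrtπ.ne' h2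
  rw [key]
  ring
end

section
/- The integral from 0 to 1 of x²/sqrt(1-x^4) dx equals Γ(3/4)²/sqrt(2π). -/
/-!
The substitution `y = x ^ 4` turns the integral into `B(3/4, 1/2) / 4`, which is
`Γ(3/4) Γ(1/2) / (4 Γ(5/4)) = Γ(3/4) √π / Γ(1/4)`. The reflection formula gives
`Γ(1/4) Γ(3/4) = π / sin(π/4) = π √2`, and eliminating `Γ(1/4)` yields `Γ(3/4)² / √(2π)`.
-/

open Real MeasureTheory Set

lemma image_pow_Ioo_zero_one {n : ℕ} (hn : n ≠ 0) :
    (fun x : ℝ => x ^ n) '' Ioo 0 1 = Ioo 0 1 := by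
  ext y
  constructor
  · rintro ⟨x, ⟨hx0, hx1⟩, rfl⟩
    exact ⟨by positivity, pow_lt_one₀ hx0.le hx1 hn⟩
  · rintro ⟨hy0, hy1⟩
    refine ⟨y ^ (n⁻¹ : ℝ), ⟨by positivity, rpow_lt_one hy0.le hy1 (by positivity)⟩, ?_⟩
    exact rpow_inv_natCast_pow hy0.le hn

theorem setIntegral_Ioo_zero_one_comp_pow {E : Type*} [NormedAddCommGroup E] [NormedSpace ℝ E]
    {n : ℕ} (hn : n ≠ 0) (g : ℝ → E) :
    ∫ x in Ioo (0:ℝ) 1, (n * x ^ (n - 1)) • g (x ^ n) = ∫ y in Ioo (0:ℝ) 1, g y := by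
  have hderiv : ∀ x ∈ Ioo (0:ℝ) 1,
      HasDerivWithinAt (fun x : ℝ => x ^ n) (n * x ^ (n - 1)) (Ioo 0 1) x :=
    fun x _ => (hasDerivAt_pow n x).hasDerivWithinAt
  have hinj : InjOn (fun x : ℝ => x ^ n) (Ioo 0 1) :=
    (pow_left_strictMonoOn₀ hn).injOn.mono fun x hx => hx.1.le
  conv_rhs => rw [← image_pow_Ioo_zero_one hn]
  rw [integral_image_eq_integral_abs_deriv_smul measurableSet_Ioo hderiv hinj]
  refine setIntegral_congr_fun measurableSet_Ioo fun x hx => ?_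
  rw [abs_of_nonneg (by have := hx.1; positivity)]

theorem integral_rpow_mul_one_sub_rpow {a b : ℝ} (ha : 0 < a) (hb : 0 < b) :
    ∫ x in (0:ℝ)..1, x ^ (a - 1) * (1 - x) ^ (b - 1) = Gamma a * Gamma b / Gamma (a + b) := by
  apply Complex.ofReal_injective
  have hbeta := Complex.betaIntegral_eq_Gamma_mul_div a b (by simpa) (by simpa)
  rw [← Complex.ofReal_add, Complex.Gamma_ofReal, Complex.Gamma_ofReal,
    Complex.Gamma_ofReal] at hbeta
  push_cast
  rw [← hbeta, ← intervalIntegral.integral_ofReal, Complex.betaIntegral]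
  refine intervalIntegral.integral_congr fun x hx => ?_
  rw [uIcc_of_le zero_le_one] at hx
  push_cast
  rw [Complex.ofReal_cpow hx.1, Complex.ofReal_cpow (sub_nonneg.2 hx.2)]
  push_cast
  ring_nf

theorem integral_rpow_mul_one_sub_pow_rpow {n : ℕ} (hn : n ≠ 0) {a b : ℝ} (ha : 0 < a)
    (hb : 0 < b) :
    ∫ x in (0:ℝ)..1, x ^ (n * a - 1) * (1 - x ^ n) ^ (b - 1) =
      Gamma a * Gamma b / (n * Gamma (a + b)) := by
  have hn' : (n : ℝ) ≠ 0 := Nat.cast_ne_zero.2 hn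
  rw [div_mul_eq_div_div_swap, ← integral_rpow_mul_one_sub_rpow ha hb, eq_div_iff hn',
    ← intervalIntegral.integral_mul_const,
    intervalIntegral.integral_of_le zero_le_one, intervalIntegral.integral_of_le zero_le_one,
    integral_Ioc_eq_integral_Ioo, integral_Ioc_eq_integral_Ioo,
    ← setIntegral_Ioo_zero_one_comp_pow hn fun y => y ^ (a - 1) * (1 - y) ^ (b - 1)]
  refine setIntegral_congr_fun measurableSet_Ioo fun x hx => ?_
  have hpow : x ^ (n - 1) * (x ^ n) ^ (a - 1) = x ^ (n * a - 1) := by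
    rw [← rpow_natCast, ← rpow_natCast_mul hx.1.le, ← rpow_add hx.1, Nat.cast_sub (by omega)]
    ring_nf
  rw [smul_eq_mul, ← hpow]
  ring

lemma Gamma_one_quarter_mul_Gamma_three_quarters : Gamma (1 / 4) * Gamma (3 / 4) = π * √2 := by
  have hsqrt : √2 * √2 = 2 := mul_self_sqrt zero_le_two
  rw [show (3 / 4 : ℝ) = 1 - 1 / 4 by norm_num, Gamma_mul_Gamma_one_sub,
    show π * (1 / 4) = π / 4 by ring, sin_pi_div_four, div_eq_iff (by positivity)]
  linear_combination (-π / 2) * hsqrt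

theorem stmt_1 :
    ∫ x in (0:ℝ)..1, x ^ 2 / Real.sqrt (1 - x ^ 4) =
      Real.Gamma (3 / 4) ^ 2 / Real.sqrt (2 * Real.pi) := by
  have hbeta_form : ∫ x in (0:ℝ)..1, x ^ 2 / √(1 - x ^ 4) =
      ∫ x in (0:ℝ)..1, x ^ ((4 : ℕ) * (3 / 4 : ℝ) - 1) * (1 - x ^ 4) ^ ((1 / 2 : ℝ) - 1) := by
    refine intervalIntegral.integral_congr fun x hx => ?_
    rw [uIcc_of_le zero_le_one] at hx
    have h : 0 ≤ 1 - x ^ 4 := sub_nonneg.2 (pow_le_one₀ hx.1 hx.2)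
    norm_num [sqrt_eq_rpow, rpow_neg h, div_eq_mul_inv]
  have hG14 : 4 * Gamma (3 / 4 + 1 / 2) = π * √2 / Gamma (3 / 4) := by
    rw [eq_div_iff (Gamma_pos_of_pos (by norm_num)).ne',
      ← Gamma_one_quarter_mul_Gamma_three_quarters, show (3 / 4 + 1 / 2 : ℝ) = 1 / 4 + 1 by norm_num,
      Gamma_add_one (by norm_num)]
    ring
  have hpi : π = √π * √π := (mul_self_sqrt pi_pos.le).symm
  rw [hbeta_form, integral_rpow_mul_one_sub_pow_rpow four_ne_zero (by norm_num) (by norm_num),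
    Nat.cast_ofNat, hG14, Gamma_one_half_eq, sqrt_mul zero_le_two]
  field_simp
  linear_combination -hpi
end

section
/- For every odd integrable periodic function f on ℝ with period a > 0 such that x ↦ f(x)/x is integrable on (0,∞), the integral ∫₀^∞ f(x)/x dx equals (π/a)·∫₀^{a/2} f(x)/tan(πx/a) dx. -/
/-!
Cut `(0, ∞)` at the points `(n + 1/2) a`. Shifting by `n a` and folding `[-a/2, 0]` onto
`[0, a/2]` with the oddness of `f`, the piece around `n a` contributes
`∫₀^{a/2} f x (1/(x - n a) + 1/(x + n a))`, so `∫₀^{(N + 1/2) a} f x / x = ∫₀^{a/2} f x K_N x`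
where `K_N` is a partial sum of the Mittag-Leffler expansion
`(π/a) cot (π x/a) = 1/x + ∑_{n ≥ 1} (1/(x - n a) + 1/(x + n a))`. On `(0, a/2]` the kernels satisfy
`|K_N x| ≤ 1/x + C/a`, and `f x / x` is integrable, so dominated convergence lets `N → ∞`.
-/

open Real MeasureTheory Filter Topology

theorem intervalIntegral.integral_symm_eq_integral_add_comp_neg {E : Type*} [NormedAddCommGroup E]
    [NormedSpace ℝ E] {g : ℝ → E} {h : ℝ} (hg : IntervalIntegrable g volume (-h) h) :
    ∫ x in -h..h, g x = ∫ x in 0..h, (g x + g (-x)) := by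
  have h0 : (0 : ℝ) ∈ Set.uIcc (-h) h := by
    rw [Set.mem_uIcc]
    rcases le_total 0 h with hh | hh
    exacts [Or.inl ⟨by linarith, hh⟩, Or.inr ⟨hh, by linarith⟩]
  have hleft : IntervalIntegrable g volume (-h) 0 := hg.mono_set (Set.uIcc_subset_uIcc_left h0)
  have hright : IntervalIntegrable g volume 0 h := hg.mono_set (Set.uIcc_subset_uIcc_right h0)
  rw [← intervalIntegral.integral_add_adjacent_intervals hleft hright,
    intervalIntegral.integral_add hright (by simpa using (hleft.comp_sub_left 0).symm), add_comm,
    intervalIntegral.integral_comp_neg, neg_zero]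

theorem abs_le_abs_of_mem_uIcc_neg {y h : ℝ} (hy : y ∈ Set.uIcc (-h) h) : |y| ≤ |h| := by
  rw [Set.mem_uIcc] at hy
  rw [abs_le]
  rcases hy with hy | hy <;> constructor <;> linarith [neg_abs_le h, le_abs_self h]

theorem IntervalIntegrable.div_add_const_of_abs_lt {f : ℝ → ℝ} {c h : ℝ}
    (hf : IntervalIntegrable f volume (-h) h) (hh : |h| < |c|) :
    IntervalIntegrable (fun y => f y / (y + c)) volume (-h) h := by
  have hne : ∀ y ∈ Set.uIcc (-h) h, y + c ≠ 0 := fun y hy hyc => by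
    have := abs_le_abs_of_mem_uIcc_neg hy
    rw [eq_neg_of_add_eq_zero_left hyc, abs_neg] at this
    linarith
  simpa only [div_eq_mul_inv] using
    hf.mul_continuousOn (g := fun y => (y + c)⁻¹) ((continuous_add_const c).continuousOn.inv₀ hne)

theorem integral_sub_add_div_eq_of_odd {f : ℝ → ℝ} {c h : ℝ} (hodd : ∀ x, f (-x) = -f x)
    (hc : ∀ x, f (x + c) = f x) (hh : |h| < |c|) (hf : IntervalIntegrable f volume (-h) h) :
    ∫ x in (c - h)..(c + h), f x / x = ∫ x in 0..h, f x * (1 / (x - c) + 1 / (x + c)) := by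
  calc ∫ x in (c - h)..(c + h), f x / x
      = ∫ y in -h..h, f y / (y + c) := by
        rw [sub_eq_neg_add, add_comm c h, ← intervalIntegral.integral_comp_add_right]
        simp only [hc]
    _ = ∫ y in 0..h, (f y / (y + c) + f (-y) / (-y + c)) :=
        intervalIntegral.integral_symm_eq_integral_add_comp_neg (hf.div_add_const_of_abs_lt hh)
    _ = ∫ x in 0..h, f x * (1 / (x - c) + 1 / (x + c)) := by
        refine intervalIntegral.integral_congr fun y _ => ?_
        rw [hodd, neg_add_eq_sub, ← neg_sub y c, div_neg, neg_div, neg_neg]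
        ring

theorem Real.hasSum_one_div_sub_add_one_div_add {t : ℝ} (ht : ∀ n : ℤ, (n : ℝ) ≠ t) :
    HasSum (fun n : ℕ => 1 / (t - (n + 1)) + 1 / (t + (n + 1))) (π * Real.cot (π * t) - 1 / t) := by
  have hz : (t : ℂ) ∈ Complex.integerComplement := by
    rintro ⟨n, hn⟩
    exact ht n (by exact_mod_cast hn)
  rw [← Complex.hasSum_ofReal]
  push_cast [Complex.ofReal_cot]
  rw [cot_series_rep' hz]
  exact (summable_cotTerm hz).hasSum

noncomputable def cotPartialFraction (a : ℝ) (N : ℕ) (x : ℝ) : ℝ :=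
  1 / x + ∑ n ∈ Finset.range N, (1 / (x - (n + 1) * a) + 1 / (x + (n + 1) * a))

theorem tendsto_cotPartialFraction {a x : ℝ} (ha : a ≠ 0) (hx : ∀ n : ℤ, (n : ℝ) ≠ x / a) :
    Tendsto (fun N => cotPartialFraction a N x) atTop (𝓝 (π / a * Real.cot (π * x / a))) := by
  have hscale : ∀ N, cotPartialFraction a N x = a⁻¹ *
      (1 / (x / a) + ∑ n ∈ Finset.range N, (1 / (x / a - (n + 1)) + 1 / (x / a + (n + 1)))) := by
    intro N
    simp only [cotPartialFraction, mul_add, Finset.mul_sum]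
    congr 1
    · field_simp
    · refine Finset.sum_congr rfl fun n _ => ?_
      congr 1 <;> field_simp
  have hlim := ((Real.hasSum_one_div_sub_add_one_div_add hx).tendsto_sum_nat.const_add
    (1 / (x / a))).const_mul a⁻¹
  simp only [hscale]
  convert hlim using 2
  rw [mul_div_assoc]
  ring

theorem abs_one_div_sub_add_one_div_add_le {x c : ℝ} (hx : 2 * x ^ 2 ≤ c ^ 2) :
    |1 / (x - c) + 1 / (x + c)| ≤ 4 * |x| / c ^ 2 := by
  rcases eq_or_ne c 0 with rfl | hc
  · have hx0 : x = 0 := pow_eq_zero_iff two_ne_zero |>.1 (by nlinarith [sq_nonneg x])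
    simp [hx0]
  have hpos : 0 < c ^ 2 - x ^ 2 := by nlinarith [sq_pos_of_ne_zero hc]
  have h1 : x - c ≠ 0 := fun h => by
    rw [sub_eq_zero.1 h, sub_self] at hpos
    exact hpos.false
  have h2 : x + c ≠ 0 := fun h => by
    rw [eq_neg_of_add_eq_zero_left h, neg_sq, sub_self] at hpos
    exact hpos.false
  have : 1 / (x - c) + 1 / (x + c) = -(2 * x / (c ^ 2 - x ^ 2)) := by
    field_simp
    ring
  rw [this, abs_neg, abs_div, abs_mul, abs_two, abs_of_pos hpos,
    div_le_div_iff₀ hpos (by positivity)]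
  nlinarith [abs_nonneg x]

theorem summable_one_div_nat_add_one_sq : Summable fun n : ℕ => 1 / ((n : ℝ) + 1) ^ 2 := by
  simpa using (summable_nat_add_iff 1).2 (Real.summable_one_div_nat_pow.2 one_lt_two)

theorem abs_cotPartialFraction_le {a x : ℝ} (ha : 0 < a) (hx : x ∈ Set.Ioc 0 (a / 2)) (N : ℕ) :
    |cotPartialFraction a N x| ≤ 1 / x + 2 / a * ∑' n : ℕ, 1 / ((n : ℝ) + 1) ^ 2 := by
  obtain ⟨hx0, hxa⟩ := hx
  have hterm : ∀ n : ℕ, |1 / (x - (n + 1) * a) + 1 / (x + (n + 1) * a)| ≤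
      2 / a * (1 / ((n : ℝ) + 1) ^ 2) := by
    intro n
    have hn : (1 : ℝ) ≤ n + 1 := by linarith [n.cast_nonneg (α := ℝ)]
    refine (abs_one_div_sub_add_one_div_add_le ?_).trans ?_
    · rw [mul_pow]
      nlinarith [mul_le_mul hxa hxa hx0.le (by linarith),
        mul_le_mul_of_nonneg_right (one_le_pow₀ hn : (1 : ℝ) ≤ (n + 1) ^ 2) (sq_nonneg a)]
    · rw [abs_of_pos hx0, mul_pow, div_le_iff₀ (by positivity)]
      field_simp
      nlinarith [mul_le_mul hn hn zero_le_one (by linarith)]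
  calc |cotPartialFraction a N x|
      ≤ |1 / x| + ∑ n ∈ Finset.range N, |1 / (x - (n + 1) * a) + 1 / (x + (n + 1) * a)| :=
        (abs_add_le _ _).trans (by gcongr; exact Finset.abs_sum_le_sum_abs _ _)
    _ ≤ 1 / x + ∑ n ∈ Finset.range N, 2 / a * (1 / ((n : ℝ) + 1) ^ 2) := by
        rw [abs_of_pos (one_div_pos.2 hx0)]
        gcongr with n
        exact hterm n
    _ ≤ 1 / x + 2 / a * ∑' n : ℕ, 1 / ((n : ℝ) + 1) ^ 2 := by
        rw [← Finset.mul_sum]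
        gcongr
        exact summable_one_div_nat_add_one_sq.sum_le_tsum _ fun n _ => by positivity

theorem intCast_ne_div_of_pos_of_lt {a x : ℝ} (hx0 : 0 < x) (hxa : x < a) (n : ℤ) :
    (n : ℝ) ≠ x / a := by
  have ha : 0 < a := hx0.trans hxa
  have h0 : 0 < x / a := div_pos hx0 ha
  have h1 : x / a < 1 := (div_lt_one ha).2 hxa
  intro hn
  rw [← hn] at h0 h1
  have hn0 : (0 : ℤ) < n := by exact_mod_cast h0
  have hn1 : n < 1 := by exact_mod_cast h1
  omega

theorem tendsto_integral_mul_cotPartialFraction {f : ℝ → ℝ} {a : ℝ} (ha : 0 < a)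
    (hf : IntegrableOn f (Set.Ioc 0 (a / 2)))
    (hfx : IntegrableOn (fun x => f x / x) (Set.Ioc 0 (a / 2))) :
    Tendsto (fun N => ∫ x in 0..a / 2, f x * cotPartialFraction a N x) atTop
      (𝓝 (∫ x in 0..a / 2, f x * (π / a * Real.cot (π * x / a)))) := by
  set C := 2 / a * ∑' n : ℕ, 1 / ((n : ℝ) + 1) ^ 2
  simp only [intervalIntegral.integral_of_le (half_pos ha).le]
  refine tendsto_integral_of_dominated_convergence (fun x => |f x / x| + C * |f x|)
    (fun N => hf.aestronglyMeasurable.mul ?_) (hfx.abs.add (hf.abs.const_mul C)) (fun N => ?_) ?_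
  · unfold cotPartialFraction
    fun_prop
  · refine (ae_restrict_iff' measurableSet_Ioc).2 (Eventually.of_forall fun x hx => ?_)
    rw [norm_mul, Real.norm_eq_abs, abs_div, abs_of_pos hx.1]
    calc |f x| * |cotPartialFraction a N x| ≤ |f x| * (1 / x + C) :=
          mul_le_mul_of_nonneg_left (abs_cotPartialFraction_le ha hx N) (abs_nonneg _)
      _ = |f x| / x + C * |f x| := by ring
  · refine (ae_restrict_iff' measurableSet_Ioc).2 (Eventually.of_forall fun x hx => ?_)
    have hxa : ∀ n : ℤ, (n : ℝ) ≠ x / a := intCast_ne_div_of_pos_of_lt hx.1 (by linarith [hx.2])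
    exact (tendsto_cotPartialFraction ha.ne' hxa).const_mul (f x)

theorem integral_div_eq_integral_mul_cotPartialFraction {f : ℝ → ℝ} {a : ℝ} (ha : 0 < a)
    (hodd : ∀ x, f (-x) = -f x) (hper : Function.Periodic f a)
    (hf : IntervalIntegrable f volume (-(a / 2)) (a / 2))
    (hfx : IntegrableOn (fun x => f x / x) (Set.Ioi 0)) (N : ℕ) :
    ∫ x in 0..N * a + a / 2, f x / x = ∫ x in 0..a / 2, f x * cotPartialFraction a N x := by
  have hfx' : ∀ s t : ℝ, 0 ≤ s → 0 ≤ t → IntervalIntegrable (fun x => f x / x) volume s t :=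
    fun s t hs ht => intervalIntegrable_iff.2 <| hfx.mono_set fun x hx =>
      (le_min hs ht).trans_lt hx.1
  have hha : ∀ n : ℕ, |a / 2| < |(n + 1) * a| := fun n => by
    rw [abs_of_pos (half_pos ha), abs_of_pos (by positivity)]
    nlinarith [n.cast_nonneg (α := ℝ)]
  have hterm : ∀ n : ℕ, IntervalIntegrable
      (fun x => f x * (1 / (x - (n + 1) * a) + 1 / (x + (n + 1) * a))) volume 0 (a / 2) := by
    intro n
    have h1 := hf.div_add_const_of_abs_lt (c := -((n + 1) * a)) (by rw [abs_neg]; exact hha n)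
    have h2 := hf.div_add_const_of_abs_lt (hha n)
    have hsub : Set.uIcc 0 (a / 2) ⊆ Set.uIcc (-(a / 2)) (a / 2) :=
      Set.uIcc_subset_uIcc (Set.mem_uIcc_of_le (by linarith) (by linarith)) Set.right_mem_uIcc
    convert (h1.add h2).mono_set hsub using 1
    funext x
    rw [← sub_eq_add_neg]
    ring
  have hpiece : ∀ n : ℕ, ∫ x in n * a + a / 2..(n + 1 : ℕ) * a + a / 2, f x / x =
      ∫ x in 0..a / 2, f x * (1 / (x - (n + 1) * a) + 1 / (x + (n + 1) * a)) := by
    intro n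
    have hc : ∀ x, f (x + (n + 1) * a) = f x := by exact_mod_cast hper.nat_mul (n + 1)
    rw [← integral_sub_add_div_eq_of_odd hodd hc (hha n) hf]
    congr 1 <;> push_cast <;> ring
  have hsum := intervalIntegral.sum_integral_adjacent_intervals
    (a := fun n : ℕ => n * a + a / 2) (n := N) (f := fun x => f x / x) fun k _ =>
      hfx' _ _ (by positivity) (by positivity)
  simp only [Nat.cast_zero, zero_mul, zero_add] at hsum
  rw [← intervalIntegral.integral_add_adjacent_intervals (hfx' 0 (a / 2) le_rfl (by positivity))
    (hfx' _ _ (by positivity) (by positivity)), ← hsum]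
  have hK : ∀ x, f x * cotPartialFraction a N x =
      f x / x + ∑ n ∈ Finset.range N, f x * (1 / (x - (n + 1) * a) + 1 / (x + (n + 1) * a)) :=
    fun x => by rw [cotPartialFraction, mul_add, Finset.mul_sum, mul_one_div]
  simp_rw [hK]
  rw [intervalIntegral.integral_add (hfx' 0 (a / 2) le_rfl (by positivity))
    (by simpa only [Finset.sum_fn] using IntervalIntegrable.sum _ fun n _ => hterm n),
    intervalIntegral.integral_finsetSum fun n _ => hterm n]
  simp only [hpiece]

theorem stmt_3_general (f : ℝ → ℝ) (a : ℝ) (ha : 0 < a)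
    (hodd : ∀ x, f (-x) = -f x)
    (hper : Function.Periodic f a)
    (hint : IntegrableOn f (Set.Ioc 0 a))
    (hint1 : IntegrableOn (fun x => f x / x) (Set.Ioi 0)) :
    ∫ x in Set.Ioi (0:ℝ), f x / x =
      (Real.pi / a) * ∫ x in (0:ℝ)..(a / 2), f x / Real.tan (Real.pi * x / a) := by
  have hf : ∀ s t, IntervalIntegrable f volume s t := hper.intervalIntegrable₀ ha.ne'
    ((intervalIntegrable_iff_integrableOn_Ioc_of_le ha.le).2 hint)
  have hlim₁ : Tendsto (fun N : ℕ => ∫ x in 0..N * a + a / 2, f x / x) atTop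
      (𝓝 (∫ x in Set.Ioi 0, f x / x)) :=
    intervalIntegral_tendsto_integral_Ioi 0 hint1
      (tendsto_atTop_add_const_right _ _ (tendsto_natCast_atTop_atTop.atTop_mul_const ha))
  have hlim₂ : Tendsto (fun N : ℕ => ∫ x in 0..N * a + a / 2, f x / x) atTop
      (𝓝 (∫ x in 0..a / 2, f x * (π / a * Real.cot (π * x / a)))) :=
    (tendsto_integral_mul_cotPartialFraction ha (hf 0 (a / 2)).1
      (hint1.mono_set Set.Ioc_subset_Ioi_self)).congr fun N =>
        (integral_div_eq_integral_mul_cotPartialFraction ha hodd hper (hf _ _) hint1 N).symm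
  rw [tendsto_nhds_unique hlim₁ hlim₂, ← intervalIntegral.integral_const_mul]
  refine intervalIntegral.integral_congr fun x _ => ?_
  -- no case split at `x = a / 2`: there `tan` and `cot` both take the junk value `0`
  rw [Real.cot_eq_cos_div_sin, Real.tan_eq_sin_div_cos, div_div_eq_mul_div]
  ring

theorem stmt_3 (f : ℝ → ℝ) (a : ℝ) (ha : 0 < a)
    (hodd : ∀ x, f (-x) = -f x)
    (hper : Function.Periodic f a)
    (hint : IntegrableOn f (Set.Ioc 0 a))
    (hint1 : IntegrableOn (fun x => f x / x) (Set.Ioi 0))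
    (hint2 : IntegrableOn (fun x => f x / Real.tan (Real.pi * x / a)) (Set.Ioc 0 (a / 2))) :
    ∫ x in Set.Ioi (0:ℝ), f x / x =
      (Real.pi / a) * ∫ x in (0:ℝ)..(a / 2), f x / Real.tan (Real.pi * x / a) :=
  stmt_3_general f a ha hodd hper hint hint1
end

section
/- For every real k with 0 < k² < 1, letting k' = sqrt(1-k²), one has ∫₀¹ x·arcsin(x)/sqrt((1-k²x²)³) dx = (1/k²)·(π/(2k') - K(k)). -/
/-!
With `c = k ^ 2`, the function `arcsin x / √(1 - c x²)` has derivative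
`c · x arcsin x / √((1 - c x²)³) + 1 / √((1 - x²)(1 - c x²))`, so the fundamental theorem of
calculus on `[0, 1]` gives `c · I + K(k) = π / (2k')`, where `I` is the integral on the left.
The elliptic integrand is integrable because it is `1 / √(1 - x²)` times a function continuous
on `[-1, 1]`.
-/

open Real MeasureTheory Set

lemma one_sub_mul_sq_pos {c x : ℝ} (hc : c < 1) (hx : x ^ 2 ≤ 1) : 0 < 1 - c * x ^ 2 := by
  rcases le_total c 0 with hc0 | hc0 <;> nlinarith [sq_nonneg x]

lemma hasDerivAt_arcsin_div_sqrt_one_sub_mul_sq {c x : ℝ} (hx : x ∈ Ioo (-1 : ℝ) 1)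
    (hcx : 0 < 1 - c * x ^ 2) :
    HasDerivAt (fun y => arcsin y / √(1 - c * y ^ 2))
      (c * (x * arcsin x / √((1 - c * x ^ 2) ^ 3)) + 1 / √((1 - x ^ 2) * (1 - c * x ^ 2))) x := by
  have hx2 : 0 < 1 - x ^ 2 := by nlinarith [hx.1, hx.2]
  have hden : HasDerivAt (fun y => √(1 - c * y ^ 2))
      (-(c * (2 * x)) / (2 * √(1 - c * x ^ 2))) x := by
    refine HasDerivAt.sqrt ?_ hcx.ne'
    simpa using ((hasDerivAt_pow 2 x).const_mul c).const_sub 1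
  refine ((hasDerivAt_arcsin hx.1.ne' hx.2.ne).div hden (sqrt_pos.2 hcx).ne').congr_deriv ?_
  rw [show (1 - c * x ^ 2) ^ 3 = (1 - c * x ^ 2) ^ 2 * (1 - c * x ^ 2) by ring,
    sqrt_mul (by positivity), sqrt_sq hcx.le, sqrt_mul hx2.le]
  set s := √(1 - c * x ^ 2) with hs_def
  rw [← sq_sqrt hcx.le, ← hs_def]
  field_simp
  ring

lemma intervalIntegrable_one_div_sqrt_one_sub_sq_mul {c : ℝ} (hc : c < 1) :
    IntervalIntegrable (fun x => 1 / √((1 - x ^ 2) * (1 - c * x ^ 2))) volume (-1) 1 := by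
  have hcont : ContinuousOn (fun x : ℝ => (√(1 - c * x ^ 2))⁻¹) (uIcc (-1) 1) := by
    refine (Continuous.continuousOn (by fun_prop)).inv₀ fun x hx => (sqrt_pos.2 ?_).ne'
    rw [uIcc_of_le (by norm_num)] at hx
    exact one_sub_mul_sq_pos hc (by nlinarith [hx.1, hx.2])
  refine (Polynomial.Chebyshev.intervalIntegrable_sqrt_one_sub_sq_inv.mul_continuousOn
    hcont).congr ?_
  intro x hx
  rw [uIoc_of_le (show (-1 : ℝ) ≤ 1 by norm_num)] at hx
  dsimp only
  rw [sqrt_mul (by nlinarith [hx.1, hx.2]), sqrt_inv, one_div, mul_inv]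

lemma mul_integral_mul_arcsin_div_sqrt_cube_add_integral {c : ℝ} (hc : c < 1) :
    c * (∫ x in (0 : ℝ)..1, x * arcsin x / √((1 - c * x ^ 2) ^ 3)) +
      ∫ x in (0 : ℝ)..1, 1 / √((1 - x ^ 2) * (1 - c * x ^ 2)) = π / (2 * √(1 - c)) := by
  have hpos : ∀ x ∈ Icc (0 : ℝ) 1, 0 < 1 - c * x ^ 2 := fun x hx =>
    one_sub_mul_sq_pos hc (by nlinarith [hx.1, hx.2])
  have hf : IntervalIntegrable (fun x => x * arcsin x / √((1 - c * x ^ 2) ^ 3)) volume 0 1 := by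
    refine ContinuousOn.intervalIntegrable ?_
    rw [uIcc_of_le zero_le_one]
    refine (Continuous.continuousOn (by fun_prop)).div (Continuous.continuousOn (by fun_prop))
      fun x hx => ?_
    have := hpos x hx
    positivity
  have hg : IntervalIntegrable (fun x => 1 / √((1 - x ^ 2) * (1 - c * x ^ 2))) volume 0 1 :=
    (intervalIntegrable_one_div_sqrt_one_sub_sq_mul hc).mono_set <| by
      rw [uIcc_of_le zero_le_one, uIcc_of_le (by norm_num)]
      exact Icc_subset_Icc (by norm_num) le_rfl
  have hcont : ContinuousOn (fun y => arcsin y / √(1 - c * y ^ 2)) (Icc 0 1) :=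
    continuous_arcsin.continuousOn.div (Continuous.continuousOn (by fun_prop))
      fun x hx => (sqrt_pos.2 (hpos x hx)).ne'
  rw [← intervalIntegral.integral_const_mul, ← intervalIntegral.integral_add (hf.const_mul c) hg,
    intervalIntegral.integral_eq_sub_of_hasDerivAt_of_le zero_le_one hcont
      (fun x hx => hasDerivAt_arcsin_div_sqrt_one_sub_mul_sq ⟨by linarith [hx.1], hx.2⟩
        (hpos x (Ioo_subset_Icc_self hx)))
      ((hf.const_mul c).add hg)]
  simp [arcsin_one, div_div]

theorem stmt_8 (k : ℝ) (hk0 : 0 < k ^ 2) (hk1 : k ^ 2 < 1) :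
    ∫ x in (0:ℝ)..1, x * Real.arcsin x / Real.sqrt ((1 - k ^ 2 * x ^ 2) ^ 3) =
      (1 / k ^ 2) * (Real.pi / (2 * Real.sqrt (1 - k ^ 2)) -
        ∫ x in (0:ℝ)..1, 1 / Real.sqrt ((1 - x ^ 2) * (1 - k ^ 2 * x ^ 2))) := by
  rw [← mul_integral_mul_arcsin_div_sqrt_cube_add_integral hk1, add_sub_cancel_right, one_div,
    inv_mul_cancel_left₀ hk0.ne']
end

section
/- For every real k with 0 < k² < 1, letting k' = sqrt(1-k²), one has ∫₀¹ x·arcsin(x)/sqrt(1-k²x²) dx = (1/k²)·(E(k) - (π/2)·k'). -/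
/-! Integrate by parts with `u = arcsin` and `v = √(1 - k²x²)`: since `v' = -k²x / v`, the integral
is `-1/k²` times `∫ u v'`, and `u' v = √((1 - k²x²)/(1 - x²))` is the integrand of `E(k)`, while the
boundary term is `arcsin 1 · √(1 - k²) = (π/2) k'`. The singularity of `u'` at `1` is harmless since
`u' = 1/√(1 - x²)` is integrable, being the derivative of the monotone function `arcsin`. -/

open Real Set MeasureTheory intervalIntegral

theorem intervalIntegrable_one_div_sqrt_one_sub_sq :
    IntervalIntegrable (fun x : ℝ => 1 / √(1 - x ^ 2)) volume (-1) 1 := by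
  rw [intervalIntegrable_iff_integrableOn_Ioc_of_le (by norm_num)]
  exact integrableOn_deriv_of_nonneg continuous_arcsin.continuousOn
    (fun x hx => hasDerivAt_arcsin hx.1.ne' hx.2.ne) (fun x _ => by positivity)

theorem hasDerivAt_sqrt_one_sub_mul_sq {c x : ℝ} (h : c * x ^ 2 < 1) :
    HasDerivAt (fun y => √(1 - c * y ^ 2)) (-(c * x) / √(1 - c * x ^ 2)) x := by
  have hpos : 0 < √(1 - c * x ^ 2) := sqrt_pos.mpr (by linarith)
  refine ((((hasDerivAt_pow 2 x).const_mul c).const_sub 1).sqrt (by linarith)).congr_deriv ?_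
  field_simp
  ring

theorem integral_arcsin_mul_deriv_sqrt_one_sub_mul_sq {c : ℝ} (hc : c < 1) :
    ∫ x in (0:ℝ)..1, arcsin x * (-(c * x) / √(1 - c * x ^ 2)) =
      π / 2 * √(1 - c) - ∫ x in (0:ℝ)..1, √((1 - c * x ^ 2) / (1 - x ^ 2)) := by
  have hlt : ∀ x ∈ Icc (0:ℝ) 1, c * x ^ 2 < 1 := fun x hx => by
    have hx2 : x ^ 2 ≤ 1 := pow_le_one₀ hx.1 hx.2
    rcases le_or_gt c 0 with h | h
    · nlinarith [mul_nonpos_of_nonpos_of_nonneg h (sq_nonneg x)]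
    · nlinarith [mul_le_mul_of_nonneg_left hx2 h.le]
  have hv'cont : ContinuousOn (fun x => -(c * x) / √(1 - c * x ^ 2)) (uIcc 0 1) := by
    rw [uIcc_of_le zero_le_one]
    exact (by fun_prop : Continuous fun x : ℝ => -(c * x)).continuousOn.div (by fun_prop)
      fun x hx => (sqrt_pos.mpr (by linarith [hlt x hx])).ne'
  rw [integral_mul_deriv_eq_deriv_mul_of_hasDerivAt (u' := fun x => 1 / √(1 - x ^ 2))
    continuous_arcsin.continuousOn
    (by fun_prop : Continuous fun y : ℝ => √(1 - c * y ^ 2)).continuousOn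
    (fun x hx => by
      simp only [zero_le_one, min_eq_left, max_eq_right] at hx
      exact hasDerivAt_arcsin (by linarith [hx.1] : (-1 : ℝ) < x).ne' hx.2.ne)
    (fun x hx => by
      simp only [zero_le_one, min_eq_left, max_eq_right] at hx
      exact hasDerivAt_sqrt_one_sub_mul_sq (hlt x (Ioo_subset_Icc_self hx)))
    (intervalIntegrable_one_div_sqrt_one_sub_sq.mono_set (by
      rw [uIcc_of_le zero_le_one, uIcc_of_le (by norm_num)]
      exact Icc_subset_Icc (by norm_num) le_rfl))
    hv'cont.intervalIntegrable]
  have hintegrand : EqOn (fun x => 1 / √(1 - x ^ 2) * √(1 - c * x ^ 2))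
      (fun x => √((1 - c * x ^ 2) / (1 - x ^ 2))) (uIcc 0 1) := fun x hx => by
    rw [uIcc_of_le zero_le_one] at hx
    simp only [sqrt_div' _ (show 0 ≤ 1 - x ^ 2 by nlinarith [hx.1, hx.2])]
    ring
  rw [integral_congr hintegrand, arcsin_one, arcsin_zero]
  norm_num

theorem stmt_9 (k : ℝ) (hk0 : 0 < k ^ 2) (hk1 : k ^ 2 < 1) :
    ∫ x in (0:ℝ)..1, x * Real.arcsin x / Real.sqrt (1 - k ^ 2 * x ^ 2) =
      (1 / k ^ 2) * ((∫ x in (0:ℝ)..1, Real.sqrt ((1 - k ^ 2 * x ^ 2) / (1 - x ^ 2))) -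
        (Real.pi / 2) * Real.sqrt (1 - k ^ 2)) := by
  have hintegrand : (fun x => x * arcsin x / √(1 - k ^ 2 * x ^ 2)) =
      fun x => -(1 / k ^ 2) * (arcsin x * (-(k ^ 2 * x) / √(1 - k ^ 2 * x ^ 2))) := by
    have hk : k ≠ 0 := by rintro rfl; norm_num at hk0
    funext x
    field_simp
  rw [hintegrand, intervalIntegral.integral_const_mul,
    integral_arcsin_mul_deriv_sqrt_one_sub_mul_sq hk1]
  ring
end

section
/- For every real k with 0 < k² < 1, ∫₀¹ x·arccos(x)/sqrt(1-k²x²) dx = (1/k²)·(π/2 - E(k)). -/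
/-!
With `F x = arccos x * √(1 - k²x²)` one has
`F' = -√((1 - k²x²) / (1 - x²)) - k² · x arccos x / √(1 - k²x²)` on `(0, 1)`
and `F 1 - F 0 = -π/2`, so the fundamental theorem of calculus gives
`E(k) + k² ∫₀¹ x arccos x / √(1 - k²x²) dx = π/2`.
The `E`-integrand is integrable since it is `O((1 - x)^(-1/2))` near `1`.
-/

open Real MeasureTheory Set

theorem intervalIntegrable_one_sub_rpow_neg_half :
    IntervalIntegrable (fun x : ℝ => (1 - x) ^ (-(1 / 2) : ℝ)) volume 0 1 := by
  simpa using ((intervalIntegral.intervalIntegrable_rpow' (a := 0) (b := 1) (r := -(1 / 2))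
    (by norm_num)).comp_sub_left 1).symm

theorem sqrt_div_one_sub_sq_le (k : ℝ) {x : ℝ} (hx : x ∈ Ioo (0 : ℝ) 1) :
    √((1 - k ^ 2 * x ^ 2) / (1 - x ^ 2)) ≤ (1 - x) ^ (-(1 / 2) : ℝ) := by
  obtain ⟨hx0, hx1⟩ := hx
  have h1x : 0 < 1 - x := by linarith
  rw [rpow_neg h1x.le, ← sqrt_eq_rpow, ← sqrt_inv]
  refine sqrt_le_sqrt ?_
  rw [div_le_iff₀ (by nlinarith), ← div_eq_inv_mul, le_div_iff₀ h1x]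
  nlinarith [mul_nonneg h1x.le (add_nonneg (mul_nonneg (sq_nonneg k) (sq_nonneg x)) hx0.le)]

theorem intervalIntegrable_sqrt_div_one_sub_sq (k : ℝ) :
    IntervalIntegrable (fun x => √((1 - k ^ 2 * x ^ 2) / (1 - x ^ 2))) volume 0 1 := by
  refine intervalIntegrable_one_sub_rpow_neg_half.mono_fun'
    (Measurable.aestronglyMeasurable (by fun_prop)) ?_
  rw [uIoc_of_le zero_le_one, ← restrict_Ioo_eq_restrict_Ioc]
  filter_upwards [ae_restrict_mem measurableSet_Ioo] with x hx
  rw [norm_of_nonneg (sqrt_nonneg _)]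
  exact sqrt_div_one_sub_sq_le k hx

theorem hasDerivAt_arccos_mul_sqrt {k x : ℝ} (hx : x ∈ Ioo (-1 : ℝ) 1)
    (hkx : 0 < 1 - k ^ 2 * x ^ 2) :
    HasDerivAt (fun y => arccos y * √(1 - k ^ 2 * y ^ 2))
      (-√((1 - k ^ 2 * x ^ 2) / (1 - x ^ 2)) -
        k ^ 2 * (x * arccos x / √(1 - k ^ 2 * x ^ 2))) x := by
  have hx2 : 0 < 1 - x ^ 2 := by nlinarith [hx.1, hx.2]
  have hinner : HasDerivAt (fun y => 1 - k ^ 2 * y ^ 2) (-(k ^ 2 * (2 * x))) x := by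
    simpa using ((hasDerivAt_pow 2 x).const_mul (k ^ 2)).const_sub 1
  refine ((hasDerivAt_arccos hx.1.ne' hx.2.ne).mul (hinner.sqrt hkx.ne')).congr_deriv ?_
  rw [sqrt_div hkx.le]
  have := sq_sqrt hkx.le
  field_simp
  ring

theorem integral_sqrt_div_add_sq_mul_integral_arccos {k : ℝ} (hk : k ^ 2 < 1) :
    (∫ x in (0 : ℝ)..1, √((1 - k ^ 2 * x ^ 2) / (1 - x ^ 2))) +
      k ^ 2 * ∫ x in (0 : ℝ)..1, x * arccos x / √(1 - k ^ 2 * x ^ 2) = π / 2 := by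
  have hpos : ∀ x ∈ Icc (0 : ℝ) 1, 0 < 1 - k ^ 2 * x ^ 2 := fun x hx => by
    nlinarith [mul_le_one₀ hx.2 hx.1 hx.2, sq_nonneg k]
  have hE := intervalIntegrable_sqrt_div_one_sub_sq k
  have hf : IntervalIntegrable (fun x => x * arccos x / √(1 - k ^ 2 * x ^ 2)) volume 0 1 := by
    refine ContinuousOn.intervalIntegrable ?_
    rw [uIcc_of_le zero_le_one]
    exact ContinuousOn.div (by fun_prop) (by fun_prop) fun x hx => (sqrt_pos.2 (hpos x hx)).ne'
  have hftc := intervalIntegral.integral_eq_sub_of_hasDerivAt_of_le zero_le_one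
    (f := fun y => arccos y * √(1 - k ^ 2 * y ^ 2)) (by fun_prop)
    (fun x hx => hasDerivAt_arccos_mul_sqrt ⟨by linarith [hx.1], hx.2⟩
      (hpos x (Ioo_subset_Icc_self hx)))
    (hE.neg.sub (hf.const_mul _))
  rw [intervalIntegral.integral_sub (by exact hE.neg) (hf.const_mul _),
    intervalIntegral.integral_neg, intervalIntegral.integral_const_mul] at hftc
  norm_num [arccos_one, arccos_zero] at hftc
  linarith

theorem stmt_10 (k : ℝ) (hk0 : 0 < k ^ 2) (hk1 : k ^ 2 < 1) :
    ∫ x in (0:ℝ)..1, x * Real.arccos x / Real.sqrt (1 - k ^ 2 * x ^ 2) =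
      (1 / k ^ 2) * (Real.pi / 2 -
        ∫ x in (0:ℝ)..1, Real.sqrt ((1 - k ^ 2 * x ^ 2) / (1 - x ^ 2))) := by
  rw [eq_comm, one_div_mul_eq_div, div_eq_iff hk0.ne']
  linarith [integral_sqrt_div_add_sq_mul_integral_arccos hk1]
end

section
/- For every real k with 0 < k² < 1, letting k' = sqrt(1-k²), one has ∫₀¹ x·arccos(x)/sqrt(k'² + k²x²) dx = (1/k²)·(E(k) - (π/2)·k'). -/
/-!
Write `u x = k'² + k² x²`. Since `(√u)' = k² x / √u`, integrating by parts against `arccos` gives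
`k² ∫₀¹ x arccos x / √u = [arccos x · √u]₀¹ + ∫₀¹ √(u / (1 - x²))`, and the boundary term is
`-(π/2) k'`. The substitutions `x = cos θ` and `x = sin θ` turn the remaining integral and `E(k)`
into the same integral `∫₀^{π/2} √(1 - k² sin² θ) dθ`.
-/

open Real Set MeasureTheory

lemma sin_image_Ioo_zero_pi_div_two : sin '' Ioo 0 (π / 2) = Ioo 0 1 := by
  ext x
  constructor
  · rintro ⟨θ, ⟨h0, h1⟩, rfl⟩
    refine ⟨sin_pos_of_pos_of_lt_pi h0 (by linarith [pi_pos]), ?_⟩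
    calc sin θ < sin (π / 2) :=
          strictMonoOn_sin ⟨by linarith, h1.le⟩ ⟨by linarith [pi_pos], le_rfl⟩ h1
      _ = 1 := sin_pi_div_two
  · rintro ⟨h0, h1⟩
    exact ⟨arcsin x, ⟨arcsin_pos.2 h0, arcsin_lt_pi_div_two.2 h1⟩,
      sin_arcsin (by linarith) h1.le⟩

lemma cos_image_Ioo_zero_pi_div_two : cos '' Ioo 0 (π / 2) = Ioo 0 1 := by
  ext x
  constructor
  · rintro ⟨θ, ⟨h0, h1⟩, rfl⟩
    refine ⟨cos_pos_of_mem_Ioo ⟨by linarith [pi_pos], h1⟩, ?_⟩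
    calc cos θ < cos 0 :=
          strictAntiOn_cos ⟨le_rfl, pi_pos.le⟩ ⟨h0.le, by linarith [pi_pos]⟩ h0
      _ = 1 := cos_zero
  · rintro ⟨h0, h1⟩
    exact ⟨arccos x, ⟨arccos_pos.2 h1, arccos_lt_pi_div_two.2 h0⟩,
      cos_arccos (by linarith) h1.le⟩

lemma injOn_sin_Ioo_zero_pi_div_two : InjOn sin (Ioo 0 (π / 2)) :=
  injOn_sin.mono <| Ioo_subset_Icc_self.trans <| Icc_subset_Icc (by linarith [pi_pos]) le_rfl

lemma injOn_cos_Ioo_zero_pi_div_two : InjOn cos (Ioo 0 (π / 2)) :=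
  injOn_cos.mono <| Ioo_subset_Icc_self.trans <| Icc_subset_Icc le_rfl (by linarith [pi_pos])

section Substitution

variable {E : Type*} [NormedAddCommGroup E] [NormedSpace ℝ E]

lemma setIntegral_Ioo_zero_one_eq_sin (f : ℝ → E) :
    ∫ x in Ioo 0 1, f x = ∫ θ in Ioo 0 (π / 2), cos θ • f (sin θ) := by
  rw [← sin_image_Ioo_zero_pi_div_two, integral_image_eq_integral_abs_deriv_smul
    measurableSet_Ioo (fun θ _ => (hasDerivAt_sin θ).hasDerivWithinAt)
    injOn_sin_Ioo_zero_pi_div_two]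
  refine setIntegral_congr_fun measurableSet_Ioo fun θ hθ => ?_
  rw [abs_of_pos (cos_pos_of_mem_Ioo ⟨by linarith [hθ.1, pi_pos], hθ.2⟩)]

lemma setIntegral_Ioo_zero_one_eq_cos (f : ℝ → E) :
    ∫ x in Ioo 0 1, f x = ∫ θ in Ioo 0 (π / 2), sin θ • f (cos θ) := by
  rw [← cos_image_Ioo_zero_pi_div_two, integral_image_eq_integral_abs_deriv_smul
    measurableSet_Ioo (fun θ _ => (hasDerivAt_cos θ).hasDerivWithinAt)
    injOn_cos_Ioo_zero_pi_div_two]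
  refine setIntegral_congr_fun measurableSet_Ioo fun θ hθ => ?_
  rw [abs_neg, abs_of_pos (sin_pos_of_pos_of_lt_pi hθ.1 (by linarith [hθ.2, pi_pos]))]

lemma integrableOn_Ioo_zero_one_iff_cos {f : ℝ → E} :
    IntegrableOn f (Ioo 0 1) ↔ IntegrableOn (fun θ => sin θ • f (cos θ)) (Ioo 0 (π / 2)) := by
  rw [← cos_image_Ioo_zero_pi_div_two, integrableOn_image_iff_integrableOn_abs_deriv_smul
    measurableSet_Ioo (fun θ _ => (hasDerivAt_cos θ).hasDerivWithinAt)
    injOn_cos_Ioo_zero_pi_div_two]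
  refine integrableOn_congr_fun (fun θ hθ => ?_) measurableSet_Ioo
  rw [abs_neg, abs_of_pos (sin_pos_of_pos_of_lt_pi hθ.1 (by linarith [hθ.2, pi_pos]))]

end Substitution

lemma mul_sqrt_div_sq {c : ℝ} (hc : 0 < c) (a : ℝ) : c * √(a / c ^ 2) = √a := by
  rw [sqrt_div' a (sq_nonneg c), sqrt_sq hc.le, mul_div_cancel₀ _ hc.ne']

lemma one_sub_add_mul_sq_pos {m x : ℝ} (hm : m < 1) (hx : x ^ 2 ≤ 1) :
    0 < 1 - m + m * x ^ 2 := by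
  nlinarith [mul_nonneg (sub_pos.2 hm).le (sub_nonneg.2 hx), sq_nonneg x]

lemma setIntegral_Ioo_sqrt_one_sub_mul_sq_div (m : ℝ) :
    ∫ x in Ioo 0 1, √((1 - m * x ^ 2) / (1 - x ^ 2)) =
      ∫ θ in Ioo 0 (π / 2), √(1 - m * sin θ ^ 2) := by
  rw [setIntegral_Ioo_zero_one_eq_sin]
  refine setIntegral_congr_fun measurableSet_Ioo fun θ hθ => ?_
  rw [smul_eq_mul, ← cos_sq',
    mul_sqrt_div_sq (cos_pos_of_mem_Ioo ⟨by linarith [hθ.1, pi_pos], hθ.2⟩)]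

lemma sin_mul_sqrt_one_sub_add_mul_cos_sq_div {θ : ℝ} (hθ : θ ∈ Ioo 0 (π / 2)) (m : ℝ) :
    sin θ * √((1 - m + m * cos θ ^ 2) / (1 - cos θ ^ 2)) = √(1 - m * sin θ ^ 2) := by
  have hu : 1 - m + m * cos θ ^ 2 = 1 - m * sin θ ^ 2 := by rw [cos_sq']; ring
  rw [hu, ← sin_sq, mul_sqrt_div_sq (sin_pos_of_pos_of_lt_pi hθ.1 (by linarith [hθ.2, pi_pos]))]

lemma setIntegral_Ioo_sqrt_one_sub_add_mul_sq_div (m : ℝ) :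
    ∫ x in Ioo 0 1, √((1 - m + m * x ^ 2) / (1 - x ^ 2)) =
      ∫ θ in Ioo 0 (π / 2), √(1 - m * sin θ ^ 2) := by
  rw [setIntegral_Ioo_zero_one_eq_cos]
  exact setIntegral_congr_fun measurableSet_Ioo fun θ hθ =>
    sin_mul_sqrt_one_sub_add_mul_cos_sq_div hθ m

lemma integrableOn_sqrt_one_sub_add_mul_sq_div (m : ℝ) :
    IntegrableOn (fun x => √((1 - m + m * x ^ 2) / (1 - x ^ 2))) (Ioo 0 1) := by
  rw [integrableOn_Ioo_zero_one_iff_cos]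
  refine IntegrableOn.congr_fun ?_
    (fun θ hθ => (sin_mul_sqrt_one_sub_add_mul_cos_sq_div hθ m).symm) measurableSet_Ioo
  exact (Continuous.integrableOn_Icc (by fun_prop)).mono_set Ioo_subset_Icc_self

lemma hasDerivAt_arccos_mul_sqrt_one_sub_add_mul_sq {m x : ℝ} (hx : x ∈ Ioo (-1) 1)
    (hu : 0 < 1 - m + m * x ^ 2) :
    HasDerivAt (fun x => arccos x * √(1 - m + m * x ^ 2))
      (m * (x * arccos x / √(1 - m + m * x ^ 2)) - √((1 - m + m * x ^ 2) / (1 - x ^ 2))) x := by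
  have hx2 : 0 < 1 - x ^ 2 := by nlinarith [hx.1, hx.2]
  have hpoly : HasDerivAt (fun x : ℝ => 1 - m + m * x ^ 2) (m * (2 * x)) x := by
    simpa using ((hasDerivAt_pow 2 x).const_mul m).const_add (1 - m)
  refine ((hasDerivAt_arccos hx.1.ne' hx.2.ne).mul (hpoly.sqrt hu.ne')).congr_deriv ?_
  rw [sqrt_div' _ hx2.le]
  field_simp
  ring

lemma mul_integral_mul_arccos_div_sqrt {m : ℝ} (hm : m < 1) :
    m * ∫ x in (0 : ℝ)..1, x * arccos x / √(1 - m + m * x ^ 2) =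
      (∫ x in (0 : ℝ)..1, √((1 - m * x ^ 2) / (1 - x ^ 2))) - π / 2 * √(1 - m) := by
  have hu : ∀ x ∈ Icc (0 : ℝ) 1, 0 < 1 - m + m * x ^ 2 := fun x hx =>
    one_sub_add_mul_sq_pos hm (by nlinarith [hx.1, hx.2])
  have hf : IntervalIntegrable (fun x => x * arccos x / √(1 - m + m * x ^ 2)) volume 0 1 :=
    ContinuousOn.intervalIntegrable_of_Icc zero_le_one <|
      ContinuousOn.div (by fun_prop) (by fun_prop) fun x hx => (sqrt_pos.2 (hu x hx)).ne'
  have hg : IntervalIntegrable (fun x => √((1 - m + m * x ^ 2) / (1 - x ^ 2))) volume 0 1 :=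
    (intervalIntegrable_iff_integrableOn_Ioo_of_le zero_le_one).2
      (integrableOn_sqrt_one_sub_add_mul_sq_div m)
  have hFTC := intervalIntegral.integral_eq_sub_of_hasDerivAt_of_le zero_le_one
    (by fun_prop) (fun x hx => hasDerivAt_arccos_mul_sqrt_one_sub_add_mul_sq
      ⟨by linarith [hx.1], hx.2⟩ (hu x (Ioo_subset_Icc_self hx))) ((hf.const_mul m).sub hg)
  have hg_eq : ∫ x in (0 : ℝ)..1, √((1 - m + m * x ^ 2) / (1 - x ^ 2)) =
      ∫ x in (0 : ℝ)..1, √((1 - m * x ^ 2) / (1 - x ^ 2)) := by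
    simp only [intervalIntegral.integral_of_le zero_le_one, integral_Ioc_eq_integral_Ioo,
      setIntegral_Ioo_sqrt_one_sub_add_mul_sq_div, setIntegral_Ioo_sqrt_one_sub_mul_sq_div]
  rw [intervalIntegral.integral_sub (hf.const_mul m) hg, intervalIntegral.integral_const_mul,
    hg_eq] at hFTC
  simp only [arccos_one, arccos_zero, zero_mul, ne_eq, OfNat.ofNat_ne_zero,
    not_false_eq_true, zero_pow, mul_zero, add_zero] at hFTC
  linarith

theorem stmt_11 (k : ℝ) (hk0 : 0 < k ^ 2) (hk1 : k ^ 2 < 1) :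
    ∫ x in (0:ℝ)..1, x * Real.arccos x /
        Real.sqrt (Real.sqrt (1 - k ^ 2) ^ 2 + k ^ 2 * x ^ 2) =
      (1 / k ^ 2) * ((∫ x in (0:ℝ)..1, Real.sqrt ((1 - k ^ 2 * x ^ 2) / (1 - x ^ 2))) -
        (Real.pi / 2) * Real.sqrt (1 - k ^ 2)) := by
  rw [sq_sqrt (sub_pos.2 hk1).le, ← mul_integral_mul_arccos_div_sqrt hk1,
    one_div, inv_mul_cancel_left₀ hk0.ne']
end

section
/- For every natural number j, the improper integral ∫₀^∞ sin^{2j+1}(x)/x dx equals (π/2)·(1/2)_j/j!, where (1/2)_j is the Pochhammer symbol. -/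
open Real Filter Polynomial

/-!
The Laplace transform identity `1 / x = ∫₀^∞ e^{-xt} dt` and Fubini turn `∫₀^T sin x / x dx` into
`∫₀^∞ (1 - e^{-Tt} (cos T + t sin T)) / (1 + t²) dt`, which is `π/2 + O(1/T)`; rescaling gives
`∫₀^∞ sin (c x) / x dx = (π/2) · sign c`. Expanding `(e^{ix} - e^{-ix})^{2j+1}` binomially writes
`2 (-4)^j sin^{2j+1} x` as `∑_m (-1)^m C(2j+1, m) sin ((2j+1-2m) x)`, so the integral equals
`(π/2) (2 (-4)^j)⁻¹ ∑_m (-1)^m C(2j+1, m) sign (2j+1-2m)`. The alternating sum is twice its first half,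
`2 (-1)^j C(2j, j)`, and `C(2j, j) / 4^j = (1/2)_j / j!`.
-/

section Dirichlet

open MeasureTheory Set

theorem integral_exp_neg_mul_Ioi {x : ℝ} (hx : 0 < x) : ∫ t in Ioi (0 : ℝ), exp (-x * t) = x⁻¹ := by
  rw [integral_exp_mul_Ioi (neg_neg_iff_pos.mpr hx)]
  simp

theorem integral_sin_mul_exp_neg_mul (t T : ℝ) :
    ∫ x in (0 : ℝ)..T, sin x * exp (-x * t) =
      (1 - exp (-T * t) * (cos T + t * sin T)) / (1 + t ^ 2) := by
  have h1t : 1 + t ^ 2 ≠ 0 := by positivity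
  have hderiv (x : ℝ) : HasDerivAt (fun x => -(exp (-x * t) * (t * sin x + cos x)) / (1 + t ^ 2))
      (sin x * exp (-x * t)) x := by
    have he : HasDerivAt (fun x => exp (-x * t)) (-t * exp (-x * t)) x := by
      simpa [mul_comm] using ((hasDerivAt_neg x).mul_const t).exp
    have hs : HasDerivAt (fun x => t * sin x + cos x) (t * cos x - sin x) x :=
      (((hasDerivAt_sin x).const_mul t).add (hasDerivAt_cos x)).congr_deriv (by ring)
    refine (((he.mul hs).neg).div_const (1 + t ^ 2)).congr_deriv ?_
    field_simp
    ring
  rw [intervalIntegral.integral_eq_sub_of_hasDerivAt (fun x _ => hderiv x)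
    (Continuous.intervalIntegrable (by fun_prop) _ _)]
  field_simp
  simp only [mul_zero, neg_zero, exp_zero, sin_zero, cos_zero, zero_add, mul_one, sub_neg_eq_add]
  ring

theorem integrable_sin_mul_exp_neg_mul {T : ℝ} :
    Integrable (Function.uncurry fun x t => sin x * exp (-x * t))
      ((volume.restrict (Ioc (0 : ℝ) T)).prod (volume.restrict (Ioi (0 : ℝ)))) := by
  have hslice {x : ℝ} (hx : 0 < x) : IntegrableOn (fun t => sin x * exp (-x * t)) (Ioi 0) :=
    (exp_neg_integrableOn_Ioi 0 hx).const_mul _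
  refine (integrable_prod_iff (by fun_prop)).mpr ⟨?_, ?_⟩
  · filter_upwards [ae_restrict_mem measurableSet_Ioc] with x hx using hslice hx.1
  · refine (continuous_sinc.abs.integrableOn_Ioc (a := 0) (b := T)).congr_fun (fun x hx => ?_)
      measurableSet_Ioc
    simp only [Function.uncurry_apply_pair, norm_mul, norm_eq_abs, abs_exp, integral_const_mul,
      integral_exp_neg_mul_Ioi hx.1, sinc_of_ne_zero hx.1.ne']
    rw [abs_div, abs_of_pos hx.1, div_eq_mul_inv]

theorem integral_sin_div_eq_integral_Ioi {T : ℝ} (hT : 0 ≤ T) :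
    ∫ x in (0 : ℝ)..T, sin x / x =
      ∫ t in Ioi (0 : ℝ), (1 - exp (-T * t) * (cos T + t * sin T)) / (1 + t ^ 2) :=
  calc ∫ x in (0 : ℝ)..T, sin x / x
      = ∫ x in Ioc (0 : ℝ) T, ∫ t in Ioi (0 : ℝ), sin x * exp (-x * t) := by
        rw [intervalIntegral.integral_of_le hT]
        refine setIntegral_congr_fun measurableSet_Ioc fun x hx => ?_
        rw [integral_const_mul, integral_exp_neg_mul_Ioi hx.1, div_eq_mul_inv]
    _ = ∫ t in Ioi (0 : ℝ), ∫ x in Ioc (0 : ℝ) T, sin x * exp (-x * t) :=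
        integral_integral_swap integrable_sin_mul_exp_neg_mul
    _ = _ := by
        refine setIntegral_congr_fun measurableSet_Ioi fun t _ => ?_
        rw [← intervalIntegral.integral_of_le hT, integral_sin_mul_exp_neg_mul]

theorem norm_exp_neg_mul_mul_div_le {T t : ℝ} (ht : 0 ≤ t) :
    ‖exp (-T * t) * (cos T + t * sin T) / (1 + t ^ 2)‖ ≤ 2 * exp (-T * t) := by
  have h1t : 0 < 1 + t ^ 2 := by positivity
  have hnum : |cos T + t * sin T| ≤ 2 * (1 + t ^ 2) :=
    calc |cos T + t * sin T| ≤ |cos T| + t * |sin T| := by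
          simpa [abs_mul, abs_of_nonneg ht] using abs_add_le (cos T) (t * sin T)
      _ ≤ 1 + t * 1 := by gcongr; exacts [abs_cos_le_one T, abs_sin_le_one T]
      _ ≤ 2 * (1 + t ^ 2) := by nlinarith [sq_nonneg (t - 1)]
  rw [norm_eq_abs, abs_div, abs_mul, abs_exp, abs_of_pos h1t, div_le_iff₀ h1t]
  calc exp (-T * t) * |cos T + t * sin T| ≤ exp (-T * t) * (2 * (1 + t ^ 2)) := by gcongr
    _ = 2 * exp (-T * t) * (1 + t ^ 2) := by ring

theorem abs_integral_sin_div_sub_pi_div_two_le {T : ℝ} (hT : 0 < T) :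
    |(∫ x in (0 : ℝ)..T, sin x / x) - π / 2| ≤ 2 / T := by
  set R : ℝ → ℝ := fun t => exp (-T * t) * (cos T + t * sin T) / (1 + t ^ 2)
  have hmajor : IntegrableOn (fun t => 2 * exp (-T * t)) (Ioi 0) :=
    (exp_neg_integrableOn_Ioi 0 hT).const_mul 2
  have hbound : ∀ᵐ t ∂volume.restrict (Ioi (0 : ℝ)), ‖R t‖ ≤ 2 * exp (-T * t) := by
    filter_upwards [ae_restrict_mem measurableSet_Ioi] with t ht
    exact norm_exp_neg_mul_mul_div_le ht.le
  have hR : IntegrableOn R (Ioi 0) := hmajor.mono' (by fun_prop) hbound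
  have hπ : ∫ t in Ioi (0 : ℝ), (1 + t ^ 2)⁻¹ = π / 2 := by
    rw [integral_Ioi_inv_one_add_sq, arctan_zero, sub_zero]
  have hsplit : ∫ x in (0 : ℝ)..T, sin x / x = π / 2 - ∫ t in Ioi (0 : ℝ), R t := by
    rw [integral_sin_div_eq_integral_Ioi hT.le, ← hπ,
      ← integral_sub integrable_inv_one_add_sq.integrableOn hR]
    refine setIntegral_congr_fun measurableSet_Ioi fun t _ => ?_
    simp only [R]
    field_simp
  calc |(∫ x in (0 : ℝ)..T, sin x / x) - π / 2| = ‖∫ t in Ioi (0 : ℝ), R t‖ := by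
        rw [hsplit, sub_sub_cancel_left, abs_neg, norm_eq_abs]
    _ ≤ ∫ t in Ioi (0 : ℝ), 2 * exp (-T * t) := norm_integral_le_of_norm_le hmajor hbound
    _ = 2 / T := by rw [integral_const_mul, integral_exp_neg_mul_Ioi hT, div_eq_mul_inv]

theorem tendsto_integral_sin_div :
    Tendsto (fun T => ∫ x in (0 : ℝ)..T, sin x / x) atTop (nhds (π / 2)) := by
  rw [tendsto_iff_norm_sub_tendsto_zero]
  refine squeeze_zero' (Eventually.of_forall fun _ => norm_nonneg _) ?_
    (tendsto_const_nhds.div_atTop tendsto_id : Tendsto (fun T : ℝ => 2 / T) atTop (nhds 0))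
  filter_upwards [eventually_gt_atTop 0] with T hT
  exact abs_integral_sin_div_sub_pi_div_two_le hT

theorem integral_sin_mul_div (c T : ℝ) :
    ∫ x in (0 : ℝ)..T, sin (c * x) / x = ∫ u in (0 : ℝ)..c * T, sin u / u := by
  have h (x : ℝ) : sin (c * x) / x = c * (sin (c * x) / (c * x)) := by
    rcases eq_or_ne c 0 with rfl | hc
    · simp
    rcases eq_or_ne x 0 with rfl | hx
    · simp
    field_simp
  simp_rw [h]
  rw [intervalIntegral.integral_const_mul, ← smul_eq_mul,
    intervalIntegral.smul_integral_comp_mul_left (fun u => sin u / u), mul_zero]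

theorem tendsto_integral_sin_mul_div (c : ℝ) :
    Tendsto (fun T => ∫ x in (0 : ℝ)..T, sin (c * x) / x) atTop (nhds (π / 2 * Real.sign c)) := by
  have hpos {c : ℝ} (hc : 0 < c) :
      Tendsto (fun T => ∫ x in (0 : ℝ)..T, sin (c * x) / x) atTop (nhds (π / 2)) := by
    simp_rw [integral_sin_mul_div]
    exact tendsto_integral_sin_div.comp (tendsto_id.const_mul_atTop hc)
  rcases lt_trichotomy c 0 with hc | rfl | hc
  · rw [Real.sign_of_neg hc, mul_neg_one]
    simpa [neg_div, intervalIntegral.integral_neg] using (hpos (neg_pos.mpr hc)).neg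
  · simp
  · rw [Real.sign_of_pos hc, mul_one]
    exact hpos hc

theorem intervalIntegrable_sin_mul_div (c T : ℝ) :
    IntervalIntegrable (fun x => sin (c * x) / x) volume 0 T := by
  refine (Continuous.intervalIntegrable (by fun_prop : Continuous fun x => c * sinc (c * x))
    0 T).congr_uIoo fun x hx => ?_
  have hx0 : x ≠ 0 := by
    rintro rfl
    simp only [uIoo, mem_Ioo, inf_lt_left, not_le, left_lt_sup] at hx
    linarith [hx.1, hx.2]
  rcases eq_or_ne c 0 with rfl | hc
  · simp
  · simp only
    rw [sinc_of_ne_zero (mul_ne_zero hc hx0)]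
    field_simp

end Dirichlet

open Finset

theorem ascPochhammer_eval_half {K : Type*} [Field K] [CharZero K] (n : ℕ) :
    (ascPochhammer K n).eval (1 / 2) = n.centralBinom * n.factorial / 4 ^ n := by
  induction n with
  | zero => simp
  | succ n ih =>
    have h : ((n + 1 : ℕ) : K) * (n + 1).centralBinom = 2 * (2 * n + 1) * n.centralBinom := by
      exact_mod_cast Nat.succ_mul_centralBinom_succ n
    rw [ascPochhammer_succ_eval, ih, Nat.factorial_succ, pow_succ]
    push_cast at h ⊢
    field_simp
    linear_combination (-2 * n.factorial : K) * h

theorem two_mul_I_mul_sin_pow (n : ℕ) (z : ℂ) :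
    (2 * Complex.I * Complex.sin z) ^ n =
      ∑ m ∈ range (n + 1), (-1) ^ m * n.choose m * Complex.exp ((n - 2 * m) * z * Complex.I) := by
  have h : 2 * Complex.I * Complex.sin z =
      -Complex.exp (-z * Complex.I) + Complex.exp (z * Complex.I) := by
    rw [Complex.sin]; ring_nf; rw [Complex.I_sq]; ring
  rw [h, add_pow]
  refine sum_congr rfl fun m hm => ?_
  have hmn : m ≤ n := Nat.lt_succ_iff.mp (mem_range.mp hm)
  rw [neg_pow, ← Complex.exp_nat_mul, ← Complex.exp_nat_mul, Nat.cast_sub hmn]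
  have hexp : Complex.exp (m * (-z * Complex.I)) * Complex.exp ((n - m) * (z * Complex.I)) =
      Complex.exp ((n - 2 * m) * z * Complex.I) := by
    rw [← Complex.exp_add]; ring_nf
  linear_combination ((-1) ^ m * n.choose m : ℂ) * hexp

theorem two_mul_neg_four_pow_mul_sin_pow_eq_sum (j : ℕ) (x : ℝ) :
    2 * (-4) ^ j * sin x ^ (2 * j + 1) =
      ∑ m ∈ range (2 * j + 2), (-1) ^ m * (2 * j + 1).choose m * sin ((2 * j + 1 - 2 * m : ℝ) * x) := by
  have h := congrArg Complex.im (two_mul_I_mul_sin_pow (2 * j + 1) x)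
  have lhs : (2 * Complex.I * Complex.sin x) ^ (2 * j + 1) =
      ((2 * (-4) ^ j * sin x ^ (2 * j + 1) : ℝ) : ℂ) * Complex.I := by
    push_cast
    rw [mul_pow, pow_succ, pow_mul, mul_pow, Complex.I_sq]
    ring
  have rhs (m : ℕ) : ((-1) ^ m * (2 * j + 1).choose m *
      Complex.exp (((2 * j + 1 : ℕ) - 2 * m) * x * Complex.I) : ℂ) =
      (((-1) ^ m * (2 * j + 1).choose m : ℝ) : ℂ) *
        Complex.exp (((2 * j + 1 - 2 * m : ℝ) * x : ℝ) * Complex.I) := by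
    push_cast; ring_nf
  simp only [lhs, rhs, Complex.im_sum, Complex.mul_I_im, Complex.ofReal_re, Complex.im_ofReal_mul,
    Complex.exp_ofReal_mul_I_im] at h
  exact h

theorem sum_neg_one_pow_mul_choose_mul_sign (j : ℕ) :
    ∑ m ∈ range (2 * j + 2), (-1) ^ m * (2 * j + 1).choose m * Real.sign (2 * j + 1 - 2 * m : ℝ) =
      2 * (-1) ^ j * (2 * j).choose j := by
  have hsplit : 2 * j + 2 = (j + 1) + (j + 1) := by ring
  have hlow : ∑ m ∈ range (j + 1), ((-1) ^ m * (2 * j + 1).choose m : ℝ) =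
      (-1) ^ j * (2 * j).choose j := by
    exact_mod_cast Int.alternating_sum_range_choose_eq_choose
  have htotal : ∑ m ∈ range (2 * j + 2), ((-1) ^ m * (2 * j + 1).choose m : ℝ) = 0 := by
    exact_mod_cast Int.alternating_sum_range_choose_of_ne (n := 2 * j + 1) (by omega)
  rw [hsplit, sum_range_add] at htotal ⊢
  have sign_low : ∀ m ∈ range (j + 1), Real.sign (2 * j + 1 - 2 * m : ℝ) = 1 := by
    intro m hm
    have : (m : ℝ) ≤ j := by exact_mod_cast Nat.lt_succ_iff.mp (mem_range.mp hm)
    exact Real.sign_of_pos (by linarith)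
  have sign_high (i : ℕ) : Real.sign (2 * j + 1 - 2 * ((j + 1 + i : ℕ) : ℝ)) = -1 :=
    Real.sign_of_neg (by push_cast; linarith [(i.cast_nonneg : (0 : ℝ) ≤ i)])
  rw [sum_congr rfl fun m hm => by rw [sign_low m hm, mul_one]]
  simp only [sign_high, mul_neg, mul_one, sum_neg_distrib]
  linarith

theorem integral_sin_pow_div_eq_sum (j : ℕ) (T : ℝ) :
    2 * (-4) ^ j * ∫ x in (0 : ℝ)..T, sin x ^ (2 * j + 1) / x =
      ∑ m ∈ range (2 * j + 2), (-1) ^ m * (2 * j + 1).choose m *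
        ∫ x in (0 : ℝ)..T, sin ((2 * j + 1 - 2 * m : ℝ) * x) / x := by
  simp_rw [← intervalIntegral.integral_const_mul]
  rw [← intervalIntegral.integral_finsetSum fun m _ =>
    (intervalIntegrable_sin_mul_div _ T).const_mul _]
  refine intervalIntegral.integral_congr fun x _ => ?_
  simp only [← mul_div_assoc, ← sum_div, two_mul_neg_four_pow_mul_sin_pow_eq_sum]

theorem stmt_12 (j : ℕ) :
    Tendsto (fun T => ∫ x in (0:ℝ)..T, Real.sin x ^ (2 * j + 1) / x) atTop
      (nhds (Real.pi / 2 * ((ascPochhammer ℝ j).eval (1 / 2) / (Nat.factorial j)))) := by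
  have h4 : (2 * (-4) ^ j : ℝ) ≠ 0 := by positivity
  have h := (tendsto_finsetSum (range (2 * j + 2)) fun m _ =>
    (tendsto_integral_sin_mul_div (2 * j + 1 - 2 * m)).const_mul
      ((-1) ^ m * (2 * j + 1).choose m : ℝ)).const_mul (2 * (-4) ^ j : ℝ)⁻¹
  simp_rw [← integral_sin_pow_div_eq_sum, inv_mul_cancel_left₀ h4] at h
  convert h using 2
  simp_rw [mul_left_comm _ (π / 2), ← mul_sum, mul_left_comm _ (π / 2)]
  rw [sum_neg_one_pow_mul_choose_mul_sign, ascPochhammer_eval_half,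
    Nat.centralBinom_eq_two_mul_choose, neg_pow, mul_comm ((-1 : ℝ) ^ j)]
  field_simp
end

section
/- For each natural number j ≥ 1, with a_r = ((1/2)_r)²/(r!)², the identity ∑_{i=0}^{j-1} a_i/(j-i) = 4·a_j·∑_{i=0}^{j-1} 1/(2i+1) holds. -/
/-!
The coefficients satisfy `a (r + 1) = ((2r + 1) / (2r + 2))² · a r`, and only this recurrence is
used (the identity is homogeneous in `a`). Writing `S j = ∑_{i<j} a i / (j - i)`, Gosper's algorithm
produces a certificate `G` with `a i / (j + 1 - i) = c_j · a i / (j - i) + G (i + 1) - G i`, where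
`c_j = ((2j + 1) / (2j + 2))²`. Summing over `i < j` gives `S (j + 1)` in terms of `S j`, and the
identity follows by induction on `j`.
-/

open Polynomial Finset

theorem ascPochhammer_half_sq_div_factorial_sq_succ {K : Type*} [Field K] [CharZero K] (r : ℕ) :
    (ascPochhammer K (r + 1)).eval (1 / 2) ^ 2 / ((r + 1).factorial : K) ^ 2 =
      ((2 * r + 1) / (2 * r + 2)) ^ 2 *
        ((ascPochhammer K r).eval (1 / 2) ^ 2 / (r.factorial : K) ^ 2) := by
  have h : (r + 1 : K) ≠ 0 := by exact_mod_cast r.succ_ne_zero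
  rw [ascPochhammer_succ_eval, Nat.factorial_succ]
  push_cast
  field_simp
  ring

section
variable {K : Type*} [Field K] [CharZero K] {a : ℕ → K}

def gosperTerm (a : ℕ → K) (j i : ℕ) : K := -(i ^ 2 * a i) / ((j + 1) ^ 2 * (j + 1 - i))

theorem div_succ_sub_eq_add_gosperTerm_sub
    (hrec : ∀ r : ℕ, a (r + 1) = ((2 * r + 1) / (2 * r + 2)) ^ 2 * a r) {i j : ℕ} (hij : i < j) :
    a i / (j + 1 - i) = ((2 * j + 1) / (2 * j + 2)) ^ 2 * (a i / (j - i)) +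
      (gosperTerm a j (i + 1) - gosperTerm a j i) := by
  have h1 : (j : K) - i ≠ 0 := by rw [sub_ne_zero]; exact_mod_cast hij.ne'
  have h2 : (j : K) + 1 - i ≠ 0 := by
    rw [sub_ne_zero]; exact_mod_cast (by omega : j + 1 ≠ i)
  have h3 : (2 * j + 2 : K) ≠ 0 := by exact_mod_cast (by omega : 2 * j + 2 ≠ 0)
  have h4 : (2 * i + 2 : K) ≠ 0 := by exact_mod_cast (by omega : 2 * i + 2 ≠ 0)
  have h5 : (j + 1 : K) ≠ 0 := by exact_mod_cast (by omega : j + 1 ≠ 0)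
  have h6 : (j : K) + 1 - (i + 1 : ℕ) = j - i := by push_cast; ring
  rw [gosperTerm, gosperTerm, hrec i, h6]
  push_cast
  field_simp
  ring

theorem sum_range_div_succ_sub
    (hrec : ∀ r : ℕ, a (r + 1) = ((2 * r + 1) / (2 * r + 2)) ^ 2 * a r) (j : ℕ) :
    ∑ i ∈ range j, a i / (j + 1 - i) =
      ((2 * j + 1) / (2 * j + 2)) ^ 2 * ∑ i ∈ range j, a i / (j - i) -
        j ^ 2 * a j / (j + 1) ^ 2 := by
  rw [sum_congr rfl fun i hi => div_succ_sub_eq_add_gosperTerm_sub hrec (mem_range.mp hi),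
    sum_add_distrib, ← mul_sum, sum_range_sub, gosperTerm, gosperTerm]
  simp [sub_eq_add_neg, neg_div]

theorem sum_range_div_sub_eq_mul_sum_range_inv_odd
    (hrec : ∀ r : ℕ, a (r + 1) = ((2 * r + 1) / (2 * r + 2)) ^ 2 * a r) {j : ℕ} (hj : 1 ≤ j) :
    ∑ i ∈ range j, a i / (j - i) = 4 * a j * ∑ i ∈ range j, 1 / (2 * (i : K) + 1) := by
  induction j, hj using Nat.le_induction with
  | base =>
    rw [sum_range_one, sum_range_one, hrec 0]
    norm_num
    ring
  | succ j _ ih =>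
    have h0 : (j + 1 : K) ≠ 0 := by exact_mod_cast (by omega : j + 1 ≠ 0)
    have h1 : (2 * j + 1 : K) ≠ 0 := by exact_mod_cast (by omega : 2 * j + 1 ≠ 0)
    rw [sum_range_succ, sum_range_succ, Nat.cast_add_one, sum_range_div_succ_sub hrec, ih,
      hrec j, add_sub_cancel_left, div_one]
    field_simp
    ring

end

theorem stmt_14 (j : ℕ) (hj : 1 ≤ j)
    (a : ℕ → ℚ)
    (ha : ∀ r, a r = ((ascPochhammer ℚ r).eval (1 / 2)) ^ 2 / ((Nat.factorial r : ℚ)) ^ 2) :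
    ∑ i ∈ Finset.range j, a i / ((j : ℚ) - (i : ℚ)) =
      4 * a j * ∑ i ∈ Finset.range j, 1 / (2 * (i : ℚ) + 1) := by
  refine sum_range_div_sub_eq_mul_sum_range_inv_odd (a := a) (fun r => ?_) hj
  rw [ha, ha, ascPochhammer_half_sq_div_factorial_sq_succ]
end

section
/- For every real k with 0 < k < 1, letting k' = sqrt(1-k²), the improper integral ∫₀^∞ ln(x)/sqrt((1+x²)(k'² + x²)) dx equals (1/2)·K(k)·ln(k'). -/
open Real MeasureTheory Set

lemma aux_tan (k c : ℝ) (hk2 : 0 < 1 - k^2) (hc : 0 < c) (hc2 : c^2 = 1 - k^2)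
    {t : ℝ} (ht : t ∈ Set.Ioo 0 (Real.pi/2)) :
    |c / Real.cos t ^ 2| * (1 / Real.sqrt ((1 + (c * Real.tan t)^2) * (c^2 + (c * Real.tan t)^2)))
      = 1 / Real.sqrt (1 - k^2 * Real.sin t^2) := by
  have hcos : 0 < Real.cos t := Real.cos_pos_of_mem_Ioo ⟨by linarith [ht.1, Real.pi_pos], ht.2⟩
  have hcos' : Real.cos t ≠ 0 := ne_of_gt hcos
  have hs : 0 < 1 - k^2 * Real.sin t^2 := by nlinarith [Real.sin_sq_le_one t, sq_nonneg k]
  have hpy := Real.sin_sq_add_cos_sq t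
  have e1 : 1 + (c * Real.tan t)^2 = (1 - k^2 * Real.sin t^2)/Real.cos t^2 := by
    rw [Real.tan_eq_sin_div_cos]; field_simp
    linear_combination hpy + Real.sin t^2 * hc2
  have e2 : c^2 + (c * Real.tan t)^2 = c^2/Real.cos t^2 := by
    rw [Real.tan_eq_sin_div_cos]; field_simp
    linear_combination hpy
  have h1 : (1 + (c * Real.tan t)^2) * (c^2 + (c * Real.tan t)^2)
      = (c / Real.cos t ^ 2)^2 * (1 - k^2 * Real.sin t^2) := by
    rw [e1, e2]; field_simp
  rw [h1, Real.sqrt_mul (sq_nonneg _), Real.sqrt_sq (by positivity : (0:ℝ) ≤ c / Real.cos t ^ 2)]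
  have h2 : 0 < Real.sqrt (1 - k^2 * Real.sin t^2) := Real.sqrt_pos.mpr hs
  rw [abs_of_pos (by positivity : (0:ℝ) < c / Real.cos t ^ 2)]
  field_simp

lemma aux_inv (c : ℝ) (hc : 0 < c) {x : ℝ} (hx : 0 < x) :
    |(-(c / x^2))| * (Real.log (c/x) / Real.sqrt ((1 + (c/x)^2) * (c^2 + (c/x)^2)))
      = (Real.log c - Real.log x) / Real.sqrt ((1 + x^2) * (c^2 + x^2)) := by
  have hx' : x ≠ 0 := ne_of_gt hx
  have h1 : (1 + (c/x)^2) * (c^2 + (c/x)^2) = (c/x^2)^2 * ((1 + x^2) * (c^2 + x^2)) := by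
    field_simp; ring
  have hF : 0 < Real.sqrt ((1 + x^2) * (c^2 + x^2)) := Real.sqrt_pos.mpr (by positivity)
  rw [h1, Real.sqrt_mul (sq_nonneg _), Real.sqrt_sq (by positivity : (0:ℝ) ≤ c / x^2),
    Real.log_div (ne_of_gt hc) hx', abs_neg, abs_of_pos (by positivity : (0:ℝ) < c / x^2)]
  field_simp

lemma aux_img_tan (c : ℝ) (hc : 0 < c) :
    (fun t => c * Real.tan t) '' Set.Ioo 0 (Real.pi/2) = Set.Ioi 0 := by
  ext y
  constructor
  · rintro ⟨t, ht, rfl⟩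
    exact mul_pos hc (Real.tan_pos_of_pos_of_lt_pi_div_two ht.1 ht.2)
  · intro hy
    have hy' : (0:ℝ) < y / c := div_pos hy hc
    refine ⟨Real.arctan (y / c),
      ⟨by rw [← Real.arctan_zero]; exact Real.arctan_strictMono hy', Real.arctan_lt_pi_div_two _⟩, ?_⟩
    simp only [Real.tan_arctan]
    field_simp
lemma aux_img_inv (c : ℝ) (hc : 0 < c) :
    (fun x => c / x) '' Set.Ioi 0 = Set.Ioi 0 := by
  ext y
  constructor
  · rintro ⟨x, hx, rfl⟩; exact div_pos hc hx
  · intro hy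
    exact ⟨c / y, div_pos hc hy, by field_simp⟩
lemma aux_inj_tan (c : ℝ) (hc : 0 < c) :
    Set.InjOn (fun t => c * Real.tan t) (Set.Ioo 0 (Real.pi/2)) := by
  intro a ha b hb hab
  have h1 : Real.tan a = Real.tan b := by
    simp only at hab
    exact mul_left_cancel₀ (ne_of_gt hc) hab
  have hsub : Set.Ioo 0 (Real.pi/2) ⊆ Set.Ioo (-(Real.pi/2)) (Real.pi/2) := by
    intro z hz; exact ⟨by linarith [hz.1, Real.pi_pos], hz.2⟩
  exact Real.injOn_tan (hsub ha) (hsub hb) h1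
lemma aux_inj_inv (c : ℝ) (hc : 0 < c) :
    Set.InjOn (fun x => c / x) (Set.Ioi 0) := by
  intro a ha b hb hab
  simp only at hab
  rw [div_eq_div_iff (ne_of_gt ha) (ne_of_gt hb)] at hab
  exact (mul_left_cancel₀ (ne_of_gt hc) hab).symm

lemma aux_deriv_tan (c : ℝ) : ∀ t ∈ Set.Ioo 0 (Real.pi/2),
    HasDerivWithinAt (fun t => c * Real.tan t) (c / Real.cos t ^ 2) (Set.Ioo 0 (Real.pi/2)) t := by
  intro t ht
  have hcos : Real.cos t ≠ 0 :=
    ne_of_gt (Real.cos_pos_of_mem_Ioo ⟨by linarith [ht.1, Real.pi_pos], ht.2⟩)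
  have := (Real.hasDerivAt_tan hcos).const_mul c
  simpa [mul_one_div, div_eq_mul_inv] using this.hasDerivWithinAt

lemma aux_deriv_inv (c : ℝ) : ∀ x ∈ Set.Ioi (0:ℝ),
    HasDerivWithinAt (fun x => c / x) (-(c / x ^ 2)) (Set.Ioi (0:ℝ)) x := by
  intro x hx
  have hx' : x ≠ 0 := ne_of_gt hx
  have := (hasDerivAt_inv hx').const_mul c
  have h2 : c * -(x ^ 2)⁻¹ = -(c / x^2) := by field_simp
  simpa [div_eq_mul_inv, h2] using this.hasDerivWithinAt

lemma aux_cont (k : ℝ) (hk2 : 0 < 1 - k^2) :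
    Continuous fun t : ℝ => 1 / Real.sqrt (1 - k^2 * Real.sin t^2) := by
  apply Continuous.div continuous_const
  · exact Real.continuous_sqrt.comp (by continuity)
  · intro t
    have hs : 0 < 1 - k^2 * Real.sin t^2 := by nlinarith [Real.sin_sq_le_one t, sq_nonneg k]
    exact ne_of_gt (Real.sqrt_pos.mpr hs)


lemma aux_log_le {x : ℝ} (hx : 0 < x) : Real.log x ≤ 2 * Real.sqrt x := by
  have h := Real.log_le_sub_one_of_pos (Real.sqrt_pos.mpr hx)
  rw [Real.log_sqrt hx.le] at h
  nlinarith [Real.sqrt_nonneg x]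

lemma aux_F_ge_c {c : ℝ} (hc : 0 < c) (x : ℝ) (hx1 : x ≤ 1) (hx0 : 0 < x) :
    c ≤ Real.sqrt ((1 + x^2) * (c^2 + x^2)) := by
  exact (Real.le_sqrt hc.le (by positivity)).mpr (by nlinarith)

lemma aux_F_ge_sq {c : ℝ} (hc : 0 < c) (x : ℝ) (hx : 0 < x) :
    x^2 ≤ Real.sqrt ((1 + x^2) * (c^2 + x^2)) := by
  exact (Real.le_sqrt (by positivity) (by positivity)).mpr (by nlinarith)

lemma aux_int_log (c : ℝ) (hc : 0 < c) :
    IntegrableOn (fun x => Real.log x / Real.sqrt ((1 + x^2) * (c^2 + x^2)))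
      (Set.Ioi (0:ℝ)) := by
  have hF : ∀ x : ℝ, 0 < Real.sqrt ((1 + x^2) * (c^2 + x^2)) :=
    fun x => Real.sqrt_pos.mpr (by positivity)
  have hcont : ContinuousOn (fun x => Real.log x / Real.sqrt ((1 + x^2) * (c^2 + x^2)))
      (Set.Ioi (0:ℝ)) := by
    apply ContinuousOn.div
    · exact Real.continuousOn_log.mono (fun x hx => ne_of_gt hx)
    · exact (Real.continuous_sqrt.comp (by continuity)).continuousOn
    · exact fun x _ => ne_of_gt (hF x)
  rw [← Set.Ioc_union_Ioi_eq_Ioi (zero_le_one)]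
  apply IntegrableOn.union
  · -- near zero
    have hg : IntegrableOn (fun x : ℝ => (2/c) * x ^ (-(1/2) : ℝ)) (Set.Ioc (0:ℝ) 1) :=
      ((intervalIntegral.intervalIntegrable_rpow' (by norm_num : (-1:ℝ) < -(1/2))).1).const_mul _
    apply Integrable.mono hg
      ((hcont.mono (Set.Ioc_subset_Ioi_self)).aestronglyMeasurable measurableSet_Ioc)
    refine (ae_restrict_iff' measurableSet_Ioc).mpr (Filter.Eventually.of_forall ?_)
    intro x hx
    have hx0 : 0 < x := hx.1
    have hlog : |Real.log x| ≤ 2 * x ^ (-(1/2) : ℝ) := by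
      rw [abs_of_nonpos (Real.log_nonpos hx0.le hx.2)]
      have h1 : Real.log x⁻¹ ≤ 2 * Real.sqrt x⁻¹ := aux_log_le (by positivity)
      rw [Real.log_inv] at h1
      have h2 : Real.sqrt x⁻¹ = x ^ (-(1/2) : ℝ) := by
        rw [Real.sqrt_inv, Real.sqrt_eq_rpow, ← Real.rpow_neg hx0.le]
      rw [h2] at h1; linarith
    have hrpow : (0:ℝ) < x ^ (-(1/2) : ℝ) := Real.rpow_pos_of_pos hx0 _
    rw [Real.norm_eq_abs, Real.norm_eq_abs, abs_div, abs_of_pos (hF x),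
      abs_of_pos (by positivity : (0:ℝ) < (2/c) * x ^ (-(1/2) : ℝ))]
    calc |Real.log x| / Real.sqrt ((1 + x^2) * (c^2 + x^2))
        ≤ |Real.log x| / c := by
          gcongr
          exact aux_F_ge_c hc x hx.2 hx0
      _ ≤ (2 * x ^ (-(1/2) : ℝ)) / c := by gcongr
      _ = (2/c) * x ^ (-(1/2) : ℝ) := by ring
  · -- at infinity
    have hg : IntegrableOn (fun x : ℝ => 2 * x ^ (-(3/2) : ℝ)) (Set.Ioi (1:ℝ)) :=
      (integrableOn_Ioi_rpow_of_lt (by norm_num) one_pos).const_mul _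
    apply Integrable.mono hg
      ((hcont.mono (Set.Ioi_subset_Ioi zero_le_one)).aestronglyMeasurable measurableSet_Ioi)
    refine (ae_restrict_iff' measurableSet_Ioi).mpr (Filter.Eventually.of_forall ?_)
    intro x hx
    have hx1 : (1:ℝ) < x := hx
    have hx0 : (0:ℝ) < x := lt_trans one_pos hx1
    have hlognn : 0 ≤ Real.log x := Real.log_nonneg hx1.le
    have hrpow : (0:ℝ) < x ^ (-(3/2) : ℝ) := Real.rpow_pos_of_pos hx0 _
    rw [Real.norm_eq_abs, Real.norm_eq_abs, abs_div, abs_of_pos (hF x), abs_of_nonneg hlognn,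
      abs_of_pos (by positivity : (0:ℝ) < 2 * x ^ (-(3/2) : ℝ))]
    have key : 2 * Real.sqrt x / x^2 = 2 * x ^ (-(3/2) : ℝ) := by
      rw [Real.sqrt_eq_rpow, show (x:ℝ)^2 = x ^ (2:ℝ) by norm_num [Real.rpow_natCast],
        mul_div_assoc, ← Real.rpow_sub hx0]
      norm_num
    calc Real.log x / Real.sqrt ((1 + x^2) * (c^2 + x^2))
        ≤ Real.log x / x^2 := by
          gcongr
          exact aux_F_ge_sq hc x hx0
      _ ≤ 2 * Real.sqrt x / x^2 := by gcongr; exact aux_log_le hx0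
      _ = 2 * x ^ (-(3/2) : ℝ) := key

theorem stmt_15 (k : ℝ) (hk0 : 0 < k) (hk1 : k < 1) :
    ∫ x in Set.Ioi (0:ℝ),
        Real.log x / Real.sqrt ((1 + x ^ 2) * (Real.sqrt (1 - k ^ 2) ^ 2 + x ^ 2)) =
      (1 / 2) * (∫ t in (0:ℝ)..(Real.pi / 2), 1 / Real.sqrt (1 - k ^ 2 * Real.sin t ^ 2)) *
        Real.log (Real.sqrt (1 - k ^ 2)) := by
  have hk2 : (0:ℝ) < 1 - k^2 := by nlinarith
  set c := Real.sqrt (1 - k ^ 2) with hcdef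
  have hc : 0 < c := Real.sqrt_pos.mpr hk2
  have hc2 : c^2 = 1 - k^2 := Real.sq_sqrt hk2.le
  set I := ∫ x in Set.Ioi (0:ℝ), Real.log x / Real.sqrt ((1 + x ^ 2) * (c ^ 2 + x ^ 2)) with hIdef
  set J := ∫ x in Set.Ioi (0:ℝ), 1 / Real.sqrt ((1 + x ^ 2) * (c ^ 2 + x ^ 2)) with hJdef
  set K := ∫ t in (0:ℝ)..(Real.pi / 2), 1 / Real.sqrt (1 - k ^ 2 * Real.sin t ^ 2) with hKdef
  -- J = K
  have hJK : J = K := by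
    rw [hJdef, ← aux_img_tan c hc,
      integral_image_eq_integral_abs_deriv_smul measurableSet_Ioo (aux_deriv_tan c)
        (aux_inj_tan c hc), hKdef,
      intervalIntegral.integral_of_le (by positivity : (0:ℝ) ≤ Real.pi/2),
      integral_Ioc_eq_integral_Ioo]
    exact setIntegral_congr_fun measurableSet_Ioo fun t ht => by
      simpa [smul_eq_mul] using aux_tan k c hk2 hc hc2 ht
  -- integrability of 1/F
  have hInt1 : IntegrableOn (fun x => 1 / Real.sqrt ((1 + x ^ 2) * (c ^ 2 + x ^ 2)))
      (Set.Ioi (0:ℝ)) := by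
    rw [← aux_img_tan c hc,
      integrableOn_image_iff_integrableOn_abs_deriv_smul measurableSet_Ioo (aux_deriv_tan c)
        (aux_inj_tan c hc)]
    have hbase : IntegrableOn (fun t : ℝ => 1 / Real.sqrt (1 - k^2 * Real.sin t^2))
        (Set.Ioo 0 (Real.pi/2)) :=
      ((aux_cont k hk2).intervalIntegrable 0 (Real.pi/2)).1.mono_set Set.Ioo_subset_Ioc_self
    exact hbase.congr_fun (fun t ht => by
      simpa [smul_eq_mul] using (aux_tan k c hk2 hc hc2 ht).symm) measurableSet_Ioo
  -- integrability of log/F : sorry for now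
  have hInt2 : IntegrableOn (fun x => Real.log x / Real.sqrt ((1 + x ^ 2) * (c ^ 2 + x ^ 2)))
      (Set.Ioi (0:ℝ)) := aux_int_log c hc
  -- inversion
  have hIeq : I = ∫ x in Set.Ioi (0:ℝ),
      (Real.log c - Real.log x) / Real.sqrt ((1 + x ^ 2) * (c ^ 2 + x ^ 2)) := by
    rw [hIdef]
    conv_lhs => rw [← aux_img_inv c hc]
    rw [integral_image_eq_integral_abs_deriv_smul measurableSet_Ioi (aux_deriv_inv c)
      (aux_inj_inv c hc)]
    exact setIntegral_congr_fun measurableSet_Ioi fun x hx => by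
      simpa [smul_eq_mul] using aux_inv c hc hx
  have hsplit : (∫ x in Set.Ioi (0:ℝ),
      (Real.log c - Real.log x) / Real.sqrt ((1 + x ^ 2) * (c ^ 2 + x ^ 2)))
      = Real.log c * J - I := by
    have : ∀ x : ℝ, (Real.log c - Real.log x) / Real.sqrt ((1 + x ^ 2) * (c ^ 2 + x ^ 2))
        = Real.log c * (1 / Real.sqrt ((1 + x ^ 2) * (c ^ 2 + x ^ 2)))
          - Real.log x / Real.sqrt ((1 + x ^ 2) * (c ^ 2 + x ^ 2)) := by
      intro x; rw [mul_one_div, sub_div]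
    simp_rw [this]
    rw [integral_sub (hInt1.const_mul _) hInt2, MeasureTheory.integral_const_mul]
  have h2I : 2 * I = Real.log c * K := by
    rw [← hJK]; linarith [hIeq.trans hsplit]
  show I = 1/2 * K * Real.log c
  linarith
end

section
/- For every real k with 0 < k < 1, letting k' = sqrt(1-k²), the integral ∫₀^{π/2} ln(tan θ)/sqrt(1 - k²·sin²θ) dθ equals -(1/2)·ln(k')·K(k). -/
/-!
The substitution `t = tan θ` turns both integrals into integrals over `(0, ∞)` against the
weight `dt / √((1 + t²) (1 + k'² t²))`. This weight is invariant under the involution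
`t ↦ 1 / (k' t)`, which turns `log t` into `-log k' - log t`. Hence the logarithmic integral `I`
satisfies `I = -log k' · K(k) - I`.
-/

open Real Set MeasureTheory intervalIntegral

noncomputable def ellipticKernel (c t : ℝ) : ℝ := 1 / √((1 + t ^ 2) * (1 + c ^ 2 * t ^ 2))

section ellipticKernel

variable {c t : ℝ}

lemma continuous_ellipticKernel (c : ℝ) : Continuous (ellipticKernel c) :=
  continuous_const.div (by fun_prop) fun t => by positivity

lemma ellipticKernel_nonneg (c t : ℝ) : 0 ≤ ellipticKernel c t := by
  unfold ellipticKernel; positivity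

lemma ellipticKernel_le_one (c t : ℝ) : ellipticKernel c t ≤ 1 := by
  unfold ellipticKernel
  rw [div_le_one (by positivity), one_le_sqrt]
  nlinarith [sq_nonneg t, sq_nonneg (c * t), mul_nonneg (sq_nonneg t) (sq_nonneg (c * t))]

lemma ellipticKernel_le_inv (hc : 0 < c) (ht : 0 < t) : ellipticKernel c t ≤ (c * t ^ 2)⁻¹ := by
  unfold ellipticKernel
  rw [one_div]
  refine inv_anti₀ (by positivity) ((le_sqrt (by positivity) (by positivity)).2 ?_)
  nlinarith [sq_nonneg t, sq_nonneg (c * t)]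

lemma ellipticKernel_inv_mul (hc : 0 < c) (ht : 0 < t) :
    ellipticKernel c (c * t)⁻¹ = c * t ^ 2 * ellipticKernel c t := by
  unfold ellipticKernel
  have h : (1 + (c * t)⁻¹ ^ 2) * (1 + c ^ 2 * (c * t)⁻¹ ^ 2)
      = ((1 + t ^ 2) * (1 + c ^ 2 * t ^ 2)) / (c * t ^ 2) ^ 2 := by
    field_simp
    ring
  rw [h, sqrt_div (by positivity), sqrt_sq (by positivity), one_div_div, mul_one_div]

lemma integrableOn_ellipticKernel (hc : 0 < c) : IntegrableOn (ellipticKernel c) (Ioi 0) := by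
  rw [← Ioc_union_Ioi_eq_Ioi zero_le_one]
  refine (continuous_ellipticKernel c).integrableOn_Ioc.union ?_
  refine ((integrableOn_Ioi_rpow_of_lt (a := -2) (by norm_num) one_pos).const_mul c⁻¹).mono'
    (continuous_ellipticKernel c).aestronglyMeasurable.restrict ?_
  filter_upwards [ae_restrict_mem measurableSet_Ioi] with t (ht : 1 < t)
  have ht0 : 0 < t := by linarith
  rw [norm_of_nonneg (ellipticKernel_nonneg c t), rpow_neg ht0.le, rpow_two, ← mul_inv]
  exact ellipticKernel_le_inv hc ht0

lemma integrableOn_log_mul_ellipticKernel (hc : 0 < c) :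
    IntegrableOn (fun t => log t * ellipticKernel c t) (Ioi 0) := by
  rw [← Ioc_union_Ioi_eq_Ioi zero_le_one]
  refine IntegrableOn.union ?_ ?_
  · have hlog : IntegrableOn log (Ioc 0 1) :=
      (intervalIntegrable_iff_integrableOn_Ioc_of_le zero_le_one).1 intervalIntegrable_log'
    exact hlog.mul_continuousOn_of_subset (continuous_ellipticKernel c).continuousOn
      measurableSet_Ioc isCompact_Icc Ioc_subset_Icc_self
  · have hmeas : Measurable fun t => log t * ellipticKernel c t :=
      measurable_log.mul (continuous_ellipticKernel c).measurable
    refine ((integrableOn_Ioi_rpow_of_lt (a := -(3 / 2)) (by norm_num) one_pos).const_mul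
      (2 / c)).mono' hmeas.aestronglyMeasurable.restrict ?_
    filter_upwards [ae_restrict_mem measurableSet_Ioi] with t (ht : 1 < t)
    have ht0 : 0 < t := by linarith
    have hlog : log t ≤ t ^ (1 / 2 : ℝ) / (1 / 2) := log_le_rpow_div ht0.le (by norm_num)
    have hpow : 2 / c * t ^ (-(3 / 2) : ℝ) = t ^ (1 / 2 : ℝ) / (1 / 2) * (c * t ^ 2)⁻¹ := by
      rw [show (-(3 / 2) : ℝ) = 1 / 2 + -2 by norm_num, rpow_add ht0, rpow_neg ht0.le, rpow_two]
      field_simp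
    rw [norm_mul, norm_of_nonneg (log_nonneg ht.le), norm_of_nonneg (ellipticKernel_nonneg c t),
      hpow]
    exact mul_le_mul hlog (ellipticKernel_le_inv hc ht0) (ellipticKernel_nonneg c t)
      (by positivity)

end ellipticKernel

lemma image_arctan_Ioi_zero : arctan '' Ioi 0 = Ioo 0 (π / 2) := by
  ext x
  constructor
  · rintro ⟨t, ht, rfl⟩
    exact ⟨arctan_zero ▸ arctan_strictMono ht, arctan_lt_pi_div_two t⟩
  · rintro ⟨h0, h2⟩
    exact ⟨tan x, tan_pos_of_pos_of_lt_pi_div_two h0 h2, arctan_tan (by linarith [pi_pos]) h2⟩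

lemma image_inv_const_mul_Ioi_zero {c : ℝ} (hc : 0 < c) :
    (fun u : ℝ => (c * u)⁻¹) '' Ioi 0 = Ioi 0 := by
  ext x
  constructor
  · rintro ⟨u, hu : 0 < u, rfl⟩
    exact mem_Ioi.2 (by positivity)
  · intro (hx : 0 < x)
    exact ⟨(c * x)⁻¹, mem_Ioi.2 (by positivity), by field_simp⟩

section

variable {E : Type*} [NormedAddCommGroup E] [NormedSpace ℝ E]

theorem integral_Ioo_zero_pi_div_two_eq_integral_Ioi_comp_arctan (g : ℝ → E) :
    ∫ θ in Ioo 0 (π / 2), g θ = ∫ t in Ioi 0, (1 + t ^ 2)⁻¹ • g (arctan t) := by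
  rw [← image_arctan_Ioi_zero, integral_image_eq_integral_abs_deriv_smul measurableSet_Ioi
    (fun t _ => (hasDerivAt_arctan t).hasDerivWithinAt) arctan_injective.injOn]
  refine setIntegral_congr_fun measurableSet_Ioi fun t _ => ?_
  rw [abs_of_pos (by positivity), one_div]

theorem integral_Ioi_zero_comp_inv_const_mul {c : ℝ} (hc : 0 < c) (g : ℝ → E) :
    ∫ t in Ioi 0, g t = ∫ u in Ioi 0, (c * u ^ 2)⁻¹ • g (c * u)⁻¹ := by
  have hderiv : ∀ u ∈ Ioi (0 : ℝ),
      HasDerivWithinAt (fun u => (c * u)⁻¹) (-(c * 1) / (c * u) ^ 2) (Ioi 0) u :=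
    fun u (hu : 0 < u) => (((hasDerivAt_id u).const_mul c).inv (by positivity)).hasDerivWithinAt
  have hinj : InjOn (fun u : ℝ => (c * u)⁻¹) (Ioi 0) := fun a _ b _ h => by
    simpa [hc.ne'] using h
  conv_lhs => rw [← image_inv_const_mul_Ioi_zero hc]
  rw [integral_image_eq_integral_abs_deriv_smul measurableSet_Ioi hderiv hinj]
  refine setIntegral_congr_fun measurableSet_Ioi fun u (hu : 0 < u) => ?_
  rw [mul_one, abs_div, abs_neg, abs_of_pos hc, abs_of_pos (by positivity)]
  congr 1
  field_simp

end

lemma sqrt_one_sub_mul_sin_arctan_sq {k c : ℝ} (hc : c ^ 2 = 1 - k ^ 2) (t : ℝ) :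
    √(1 - k ^ 2 * sin (arctan t) ^ 2) = √(1 + c ^ 2 * t ^ 2) / √(1 + t ^ 2) := by
  have h1 : 0 < 1 + t ^ 2 := by positivity
  rw [sin_arctan, div_pow, sq_sqrt h1.le, ← sqrt_div (by positivity)]
  congr 1
  field_simp
  rw [hc]
  ring

lemma ellipticKernel_eq_inv_one_add_sq_div {k c : ℝ} (hc : c ^ 2 = 1 - k ^ 2) (t : ℝ) :
    ellipticKernel c t = (1 + t ^ 2)⁻¹ / √(1 - k ^ 2 * sin (arctan t) ^ 2) := by
  have h1 : 0 < 1 + t ^ 2 := by positivity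
  have hs : 0 < √(1 + t ^ 2) := sqrt_pos.2 h1
  rw [sqrt_one_sub_mul_sin_arctan_sq hc, ellipticKernel, sqrt_mul h1.le]
  nth_rewrite 2 [← sq_sqrt h1.le]
  field_simp

theorem integral_div_sqrt_one_sub_mul_sin_sq {k c : ℝ} (hc : c ^ 2 = 1 - k ^ 2) (g : ℝ → ℝ) :
    ∫ θ in 0..π / 2, g (tan θ) / √(1 - k ^ 2 * sin θ ^ 2)
      = ∫ t in Ioi 0, g t * ellipticKernel c t := by
  rw [integral_of_le (by positivity), integral_Ioc_eq_integral_Ioo,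
    integral_Ioo_zero_pi_div_two_eq_integral_Ioi_comp_arctan]
  refine setIntegral_congr_fun measurableSet_Ioi fun t _ => ?_
  rw [smul_eq_mul, tan_arctan, ellipticKernel_eq_inv_one_add_sq_div hc]
  ring

theorem integral_log_mul_ellipticKernel {c : ℝ} (hc : 0 < c) :
    ∫ t in Ioi 0, log t * ellipticKernel c t
      = -(1 / 2) * log c * ∫ t in Ioi 0, ellipticKernel c t := by
  have hinv : ∫ t in Ioi 0, log t * ellipticKernel c t
      = ∫ u in Ioi 0, (-log c * ellipticKernel c u - log u * ellipticKernel c u) := by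
    rw [integral_Ioi_zero_comp_inv_const_mul hc]
    refine setIntegral_congr_fun measurableSet_Ioi fun u (hu : 0 < u) => ?_
    rw [smul_eq_mul, ellipticKernel_inv_mul hc hu, log_inv, log_mul hc.ne' hu.ne']
    field_simp
    ring
  rw [integral_sub ((integrableOn_ellipticKernel hc).const_mul _)
    (integrableOn_log_mul_ellipticKernel hc), MeasureTheory.integral_const_mul] at hinv
  linarith

theorem stmt_16 (k : ℝ) (hk0 : 0 < k) (hk1 : k < 1) :
    ∫ θ in (0:ℝ)..(Real.pi / 2),
        Real.log (Real.tan θ) / Real.sqrt (1 - k ^ 2 * Real.sin θ ^ 2) =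
      -(1 / 2) * Real.log (Real.sqrt (1 - k ^ 2)) *
        ∫ t in (0:ℝ)..(Real.pi / 2), 1 / Real.sqrt (1 - k ^ 2 * Real.sin t ^ 2) := by
  have hk : 0 < 1 - k ^ 2 := by nlinarith
  have hc2 : √(1 - k ^ 2) ^ 2 = 1 - k ^ 2 := sq_sqrt hk.le
  have hK := integral_div_sqrt_one_sub_mul_sin_sq hc2 fun _ => 1
  simp only [one_mul] at hK
  rw [integral_div_sqrt_one_sub_mul_sin_sq hc2 log, hK,
    integral_log_mul_ellipticKernel (sqrt_pos.2 hk)]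
end

section
/- For real numbers a > b > 0, ∫₀^∞ ln(x)/sqrt((a²+x²)(b²+x²)) dx = (1/(2a))·K(sqrt(a²-b²)/a)·ln(ab). -/
open Real MeasureTheory

open Set

theorem stmt_17 (a b : ℝ) (hb : 0 < b) (hab : b < a) :
    ∫ x in Set.Ioi (0:ℝ), Real.log x / Real.sqrt ((a ^ 2 + x ^ 2) * (b ^ 2 + x ^ 2)) =
      (1 / (2 * a)) *
        (∫ t in (0:ℝ)..(Real.pi / 2),
          1 / Real.sqrt (1 - (Real.sqrt (a ^ 2 - b ^ 2) / a) ^ 2 * Real.sin t ^ 2)) *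
        Real.log (a * b) := by
  have ha : 0 < a := hb.trans hab
  set D : ℝ → ℝ := fun x => Real.sqrt ((a ^ 2 + x ^ 2) * (b ^ 2 + x ^ 2)) with hD
  have hDpos : ∀ x : ℝ, 0 < D x := fun x => Real.sqrt_pos.2 (by positivity)
  have hDcont : Continuous D := by fun_prop
  have hDab : ∀ x : ℝ, a * b ≤ D x := by
    intro x
    have : a * b = Real.sqrt ((a*b)^2) := (Real.sqrt_sq (by positivity)).symm
    rw [this]
    exact Real.sqrt_le_sqrt (by nlinarith [sq_nonneg x, sq_nonneg (x*x)])
  have hDsq : ∀ x : ℝ, x ^ 2 ≤ D x := by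
    intro x
    have : x ^ 2 = Real.sqrt ((x^2)^2) := (Real.sqrt_sq (by positivity)).symm
    rw [this]
    exact Real.sqrt_le_sqrt (by nlinarith [sq_nonneg x, sq_nonneg a, sq_nonneg b, sq_nonneg (a*b)])
  have hlog_le : ∀ x : ℝ, 0 < x → Real.log x ≤ 2 * Real.sqrt x := by
    intro x hx
    have h1 : Real.log x = 2 * Real.log (Real.sqrt x) := by
      rw [Real.log_sqrt hx.le]; ring
    have h2 : Real.log (Real.sqrt x) ≤ Real.sqrt x - 1 :=
      Real.log_le_sub_one_of_pos (Real.sqrt_pos.2 hx)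
    nlinarith [Real.sqrt_nonneg x]
  have hg_int : IntegrableOn (fun x => 1 / D x) (Ioi (0:ℝ)) := by
    have hu : Ioc (0:ℝ) 1 ∪ Ioi 1 = Ioi 0 := Ioc_union_Ioi_eq_Ioi zero_le_one
    rw [← hu]
    apply IntegrableOn.union
    · apply Integrable.mono' (integrableOn_const (C := (a*b)⁻¹) (μ := volume) (s := Ioc (0:ℝ) 1) measure_Ioc_lt_top.ne enorm_ne_top)
        ((hDcont.inv₀ (fun x => (hDpos x).ne')).aestronglyMeasurable.restrict.congr ?_)
      · filter_upwards with x
        rw [Real.norm_eq_abs, abs_of_nonneg (by positivity)]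
        rw [one_div]
        exact inv_anti₀ (by positivity) (hDab x)
      · filter_upwards with x; simp [one_div]
    · apply Integrable.mono' (integrableOn_Ioi_rpow_of_lt (by norm_num : (-2:ℝ) < -1) one_pos)
        ((hDcont.inv₀ (fun x => (hDpos x).ne')).aestronglyMeasurable.restrict.congr ?_)
      · filter_upwards [ae_restrict_mem measurableSet_Ioi] with x hx
        have hx1 : (1:ℝ) < x := hx
        have hx0 : (0:ℝ) < x := by linarith
        rw [Real.norm_eq_abs, abs_of_nonneg (by positivity), one_div]
        have : x ^ (-2:ℝ) = (x ^ 2)⁻¹ := by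
          rw [Real.rpow_neg hx0.le, Real.rpow_two]
        rw [this]
        exact inv_anti₀ (by positivity) (hDsq x)
      · filter_upwards with x; simp [one_div]
  have hmf : AEStronglyMeasurable (fun x => Real.log x / D x) volume :=
    (Real.measurable_log.div hDcont.measurable).aestronglyMeasurable
  have hf_int : IntegrableOn (fun x => Real.log x / D x) (Ioi (0:ℝ)) := by
    have hu : Ioc (0:ℝ) 1 ∪ Ioi 1 = Ioi 0 := Ioc_union_Ioi_eq_Ioi zero_le_one
    rw [← hu]
    apply IntegrableOn.union
    · have hdom : IntegrableOn (fun x : ℝ => (2/(a*b)) * x ^ (-1/2 : ℝ)) (Ioc (0:ℝ) 1) := by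
        apply Integrable.const_mul
        exact (integrableOn_Ioc_iff_integrableOn_Ioo).2
          ((intervalIntegral.integrableOn_Ioo_rpow_iff one_pos).2 (by norm_num))
      apply Integrable.mono' hdom hmf.restrict
      filter_upwards [ae_restrict_mem measurableSet_Ioc] with x hx
      have hx0 : (0:ℝ) < x := hx.1
      have hx1 : x ≤ 1 := hx.2
      have hlx : |Real.log x| ≤ 2 * x ^ (-1/2 : ℝ) := by
        have h1 : Real.log x ≤ 0 := Real.log_nonpos hx0.le hx1
        have h2 : -Real.log x = Real.log x⁻¹ := (Real.log_inv x).symm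
        have h3 : Real.log x⁻¹ ≤ 2 * Real.sqrt x⁻¹ := hlog_le _ (by positivity)
        have h4 : Real.sqrt x⁻¹ = x ^ (-1/2 : ℝ) := by
          rw [Real.sqrt_inv, Real.sqrt_eq_rpow, ← Real.rpow_neg hx0.le]
          norm_num
        rw [abs_of_nonpos h1, h2]
        rw [h4] at h3
        linarith
      rw [Real.norm_eq_abs, abs_div, abs_of_pos (hDpos x)]
      calc |Real.log x| / D x ≤ (2 * x ^ (-1/2 : ℝ)) / (a*b) := by
            apply div_le_div₀ (by positivity) hlx (by positivity) (hDab x)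
        _ = 2/(a*b) * x ^ (-1/2 : ℝ) := by ring
    · have hdom : IntegrableOn (fun x : ℝ => 2 * x ^ (-3/2 : ℝ)) (Ioi (1:ℝ)) := by
        apply Integrable.const_mul
        exact integrableOn_Ioi_rpow_of_lt (by norm_num) one_pos
      apply Integrable.mono' hdom hmf.restrict
      filter_upwards [ae_restrict_mem measurableSet_Ioi] with x hx
      have hx1 : (1:ℝ) < x := hx
      have hx0 : (0:ℝ) < x := by linarith
      have hlx : |Real.log x| ≤ 2 * Real.sqrt x := by
        rw [abs_of_nonneg (Real.log_nonneg hx1.le)]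
        exact hlog_le x hx0
      rw [Real.norm_eq_abs, abs_div, abs_of_pos (hDpos x)]
      calc |Real.log x| / D x ≤ (2 * Real.sqrt x) / x ^ 2 := by
            apply div_le_div₀ (by positivity) hlx (by positivity) (hDsq x)
        _ = 2 * x ^ (-3/2 : ℝ) := by
            rw [Real.sqrt_eq_rpow, mul_div_assoc, ← Real.rpow_two x, ← Real.rpow_sub hx0]
            norm_num
  have hab0 : (0:ℝ) < a * b := by positivity
  have himg1 : (fun u : ℝ => a*b/u) '' Ioi 0 = Ioi 0 := by
    ext y
    simp only [mem_image, mem_Ioi]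
    constructor
    · rintro ⟨u, hu, rfl⟩; positivity
    · intro hy
      exact ⟨a*b/y, by positivity, by field_simp⟩
  have hderiv1 : ∀ u ∈ Ioi (0:ℝ),
      HasDerivWithinAt (fun u : ℝ => a*b/u) (-(a*b)/u^2) (Ioi 0) u := by
    intro u hu
    have hu0 : (0:ℝ) < u := hu
    have h := (hasDerivAt_inv hu0.ne').const_mul (a*b)
    have he : a*b * -(u^2)⁻¹ = -(a*b)/u^2 := by field_simp
    rw [he] at h
    exact (h.congr_of_eventuallyEq (by filter_upwards with x; rw [div_eq_mul_inv])).hasDerivWithinAt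
  have hinj1 : InjOn (fun u : ℝ => a*b/u) (Ioi 0) := by
    intro x hx y hy h
    simp only [mem_Ioi] at hx hy
    field_simp at h
    exact h.symm
  have hstep1 : ∫ x in Ioi (0:ℝ), Real.log x / D x
      = ∫ u in Ioi (0:ℝ), (Real.log (a*b) - Real.log u) / D u := by
    conv_lhs => rw [← himg1]
    rw [integral_image_eq_integral_abs_deriv_smul measurableSet_Ioi hderiv1 hinj1]
    apply setIntegral_congr_fun measurableSet_Ioi
    intro u hu
    have hu0 : (0:ℝ) < u := hu
    have hDcomp : D (a*b/u) = (a*b/u^2) * D u := by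
      have h1 : (a^2 + (a*b/u)^2) * (b^2 + (a*b/u)^2)
          = (a*b/u^2)^2 * ((a^2+u^2)*(b^2+u^2)) := by
        field_simp; ring
      show Real.sqrt _ = _
      rw [h1, Real.sqrt_mul (sq_nonneg _), Real.sqrt_sq (by positivity)]
    simp only [smul_eq_mul]
    rw [hDcomp, abs_div, abs_neg, abs_of_pos hab0, abs_of_pos (by positivity : (0:ℝ) < u^2),
      Real.log_div hab0.ne' hu0.ne']
    have hc : (a*b/u^2) ≠ 0 := by positivity
    field_simp
  have hIJ : ∫ x in Ioi (0:ℝ), Real.log x / D x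
      = Real.log (a*b) * (∫ x in Ioi (0:ℝ), 1 / D x)
        - ∫ x in Ioi (0:ℝ), Real.log x / D x := by
    refine hstep1.trans ?_
    have h1 : ∀ u : ℝ, (Real.log (a*b) - Real.log u)/D u
        = Real.log (a*b) * (1/D u) - Real.log u / D u := by intro u; ring
    simp_rw [h1]
    rw [integral_sub (hg_int.const_mul _) hf_int, integral_const_mul]
  -- substitution 2 : x = b * tan t
  set K : ℝ := (Real.sqrt (a^2-b^2)/a)^2 with hK
  have hk2 : K = (a^2-b^2)/a^2 := by
    rw [hK, div_pow, Real.sq_sqrt (by nlinarith : (0:ℝ) ≤ a^2 - b^2)]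
  have hK0 : 0 ≤ K := sq_nonneg _
  have hKlt : K < 1 := by
    rw [hk2, div_lt_one (by positivity)]; nlinarith
  have himg2 : (fun t : ℝ => b * Real.tan t) '' Ioo 0 (π/2) = Ioi 0 := by
    ext y
    simp only [mem_image, mem_Ioo, mem_Ioi]
    constructor
    · rintro ⟨t, ⟨h1, h2⟩, rfl⟩
      exact mul_pos hb (Real.tan_pos_of_pos_of_lt_pi_div_two h1 h2)
    · intro hy
      refine ⟨Real.arctan (y/b), ⟨?_, Real.arctan_lt_pi_div_two _⟩, ?_⟩
      · have : Real.arctan 0 < Real.arctan (y/b) :=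
          Real.arctan_strictMono (by positivity)
        simpa [Real.arctan_zero] using this
      · rw [Real.tan_arctan]; field_simp
  have hderiv2 : ∀ t ∈ Ioo (0:ℝ) (π/2),
      HasDerivWithinAt (fun t : ℝ => b * Real.tan t) (b * (1/Real.cos t^2)) (Ioo 0 (π/2)) t := by
    intro t ht
    have hc : 0 < Real.cos t := Real.cos_pos_of_mem_Ioo ⟨by linarith [ht.1, Real.pi_pos], ht.2⟩
    exact ((Real.hasDerivAt_tan hc.ne').const_mul b).hasDerivWithinAt
  have hinj2 : InjOn (fun t : ℝ => b * Real.tan t) (Ioo 0 (π/2)) := by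
    intro x hx y hy h
    have h' : Real.tan x = Real.tan y := mul_left_cancel₀ hb.ne' h
    have hsub : Ioo (0:ℝ) (π/2) ⊆ Ioo (-(π/2)) (π/2) := by
      intro z hz; exact ⟨by linarith [hz.1, Real.pi_pos], hz.2⟩
    exact Real.strictMonoOn_tan.injOn (hsub hx) (hsub hy) h'
  have hstep2 : ∫ x in Ioi (0:ℝ), 1 / D x
      = ∫ t in Ioo (0:ℝ) (π/2), (1/a) * (1 / Real.sqrt (1 - K * Real.sin t ^ 2)) := by
    conv_lhs => rw [← himg2]
    rw [integral_image_eq_integral_abs_deriv_smul measurableSet_Ioo hderiv2 hinj2]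
    apply setIntegral_congr_fun measurableSet_Ioo
    intro t ht
    have hc : 0 < Real.cos t := Real.cos_pos_of_mem_Ioo ⟨by linarith [ht.1, Real.pi_pos], ht.2⟩
    have h1K : 0 < 1 - K * Real.sin t ^ 2 := by
      nlinarith [Real.sin_sq_le_one t, hK0]
    have hE : a^2*Real.cos t^2 + b^2*Real.sin t^2 = a^2 * (1 - K * Real.sin t^2) := by
      rw [hk2, Real.cos_sq']
      field_simp
      ring
    have hprod : (a^2 + (b*Real.tan t)^2) * (b^2 + (b*Real.tan t)^2)
        = ((b/Real.cos t^2) * a)^2 * (1 - K * Real.sin t^2) := by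
      have hA : b^2 + (b*Real.tan t)^2 = b^2/Real.cos t^2 := by
        rw [Real.tan_eq_sin_div_cos]
        field_simp
        linear_combination (Real.sin_sq_add_cos_sq t)
      have hB : a^2 + (b*Real.tan t)^2
          = (a^2*Real.cos t^2 + b^2*Real.sin t^2)/Real.cos t^2 := by
        rw [Real.tan_eq_sin_div_cos]
        field_simp
      rw [hA, hB, hE]
      field_simp
    have hD2 : D (b*Real.tan t) = (b/Real.cos t^2) * a * Real.sqrt (1 - K * Real.sin t^2) := by
      show Real.sqrt _ = _
      rw [hprod, Real.sqrt_mul (sq_nonneg _), Real.sqrt_sq (by positivity)]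
    simp only [smul_eq_mul]
    rw [hD2, abs_of_pos (by positivity : (0:ℝ) < b * (1/Real.cos t^2))]
    have hs : 0 < Real.sqrt (1 - K * Real.sin t^2) := Real.sqrt_pos.2 h1K
    field_simp
  have hJ : ∫ x in Ioi (0:ℝ), 1 / D x
      = (1/a) * ∫ t in (0:ℝ)..(π/2), 1 / Real.sqrt (1 - K * Real.sin t ^ 2) := by
    rw [hstep2, integral_const_mul, intervalIntegral.integral_of_le (by positivity : (0:ℝ) ≤ π/2),
      integral_Ioc_eq_integral_Ioo]
  have hfin : ∫ x in Ioi (0:ℝ), Real.log x / D x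
      = Real.log (a*b) * (∫ x in Ioi (0:ℝ), 1 / D x) / 2 := by linarith [hIJ]
  rw [hfin, hJ]
  ring
end

section
/- For every real k with 0 < k < 1, letting k' = sqrt(1-k²), one has ∫₀^{π/2} ln(1 - k²·sin²x)/sqrt(1 - k²·sin²x) dx = K(k)·ln(k'). -/
/-!
Substitute `x ↦ φ(x)` with `sin φ = cos x / Δ(x)`, where `Δ(x) = √(1 - k² sin² x)`. This is an
involution of `[0, π/2]` reversing the endpoints, with `Δ(φ) = k' / Δ(x)` and
`dφ = -k' dx / Δ(x)²`. Hence `dφ / Δ(φ) = -dx / Δ(x)` and `log Δ(φ)² = log k'² - log Δ(x)²`, so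
the integral `I` of `log Δ² / Δ` satisfies `I = K(k) log k'² - I`.
-/

open Real Set intervalIntegral

section ComplementaryAmplitude

variable {k : ℝ}

lemma one_sub_sq_mul_sin_sq_pos (hk : k ^ 2 < 1) (x : ℝ) : 0 < 1 - k ^ 2 * sin x ^ 2 := by
  nlinarith [sin_sq_le_one x, sq_nonneg (sin x)]

lemma cos_sq_le_one_sub_sq_mul_sin_sq (hk : k ^ 2 ≤ 1) (x : ℝ) :
    cos x ^ 2 ≤ 1 - k ^ 2 * sin x ^ 2 := by
  nlinarith [sin_sq_add_cos_sq x, sq_nonneg (sin x)]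

/-- If `x = am u` then `complAmplitude k x = am (K - u)`, since `sn (K - u) = cn u / dn u`. -/
noncomputable def complAmplitude (k x : ℝ) : ℝ :=
  arcsin (cos x / √(1 - k ^ 2 * sin x ^ 2))

lemma complAmplitude_zero : complAmplitude k 0 = π / 2 := by
  simp [complAmplitude]

lemma complAmplitude_pi_div_two : complAmplitude k (π / 2) = 0 := by
  simp [complAmplitude]

lemma continuous_complAmplitude (hk : k ^ 2 < 1) : Continuous (complAmplitude k) :=
  continuous_arcsin.comp <| continuous_cos.div (by fun_prop) fun x =>
    (sqrt_pos.mpr (one_sub_sq_mul_sin_sq_pos hk x)).ne'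

lemma sin_complAmplitude (hk : k ^ 2 < 1) (x : ℝ) :
    sin (complAmplitude k x) = cos x / √(1 - k ^ 2 * sin x ^ 2) := by
  have hΔ := one_sub_sq_mul_sin_sq_pos hk x
  have hsq : (cos x / √(1 - k ^ 2 * sin x ^ 2)) ^ 2 ≤ 1 := by
    rw [div_pow, sq_sqrt hΔ.le, div_le_one hΔ]
    exact cos_sq_le_one_sub_sq_mul_sin_sq hk.le x
  obtain ⟨hlow, hhigh⟩ := abs_le.mp ((sq_le_one_iff_abs_le_one _).mp hsq)
  exact sin_arcsin hlow hhigh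

lemma one_sub_sq_mul_sin_sq_complAmplitude (hk : k ^ 2 < 1) (x : ℝ) :
    1 - k ^ 2 * sin (complAmplitude k x) ^ 2 = (1 - k ^ 2) / (1 - k ^ 2 * sin x ^ 2) := by
  have hΔ := one_sub_sq_mul_sin_sq_pos hk x
  rw [sin_complAmplitude hk, div_pow, sq_sqrt hΔ.le]
  field_simp
  linear_combination -k ^ 2 * sin_sq_add_cos_sq x

lemma cos_complAmplitude (hk : k ^ 2 < 1) {x : ℝ} (hx : 0 ≤ sin x) :
    cos (complAmplitude k x) = sin x * √(1 - k ^ 2) / √(1 - k ^ 2 * sin x ^ 2) := by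
  have hΔ := one_sub_sq_mul_sin_sq_pos hk x
  rw [complAmplitude, cos_arcsin, ← sqrt_sq (by positivity :
    0 ≤ sin x * √(1 - k ^ 2) / √(1 - k ^ 2 * sin x ^ 2))]
  congr 1
  rw [div_pow, div_pow, mul_pow, sq_sqrt hΔ.le, sq_sqrt (by linarith)]
  field_simp
  linear_combination -sin_sq_add_cos_sq x

lemma hasDerivAt_complAmplitude (hk : k ^ 2 < 1) {x : ℝ} (hx : x ∈ Ioo 0 (π / 2)) :
    HasDerivAt (complAmplitude k) (-√(1 - k ^ 2) / (1 - k ^ 2 * sin x ^ 2)) x := by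
  have hsin : 0 < sin x := sin_pos_of_pos_of_lt_pi hx.1 (by linarith [hx.2, pi_pos])
  have hΔ := one_sub_sq_mul_sin_sq_pos hk x
  have hD : 0 < √(1 - k ^ 2 * sin x ^ 2) := sqrt_pos.mpr hΔ
  have hc : 0 < √(1 - k ^ 2) := sqrt_pos.mpr (by linarith)
  have hroot := cos_complAmplitude hk hsin.le
  rw [complAmplitude, cos_arcsin] at hroot
  have hroot_pos : 0 < √(1 - (cos x / √(1 - k ^ 2 * sin x ^ 2)) ^ 2) := by
    rw [hroot]; positivity
  have hdΔ : HasDerivAt (fun y => 1 - k ^ 2 * sin y ^ 2) (-(k ^ 2 * (2 * sin x * cos x))) x :=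
    ((((hasDerivAt_sin x).fun_pow 2).const_mul (k ^ 2)).const_sub 1).congr_deriv (by ring)
  have hdy := (hasDerivAt_cos x).div (hdΔ.sqrt hΔ.ne') hD.ne'
  have harcsin := hasDerivAt_arcsin (x := cos x / √(1 - k ^ 2 * sin x ^ 2))
    (by rintro h; simp [h] at hroot_pos) (by rintro h; simp [h] at hroot_pos)
  refine (harcsin.comp x hdy).congr_deriv ?_
  have hD2 := sq_sqrt hΔ.le
  have hc2 := sq_sqrt (by linarith : 0 ≤ 1 - k ^ 2)
  rw [hroot]
  generalize √(1 - k ^ 2 * sin x ^ 2) = D at *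
  generalize √(1 - k ^ 2) = c at *
  rw [← hD2]
  field_simp
  linear_combination hc2 - hD2 + k ^ 2 * sin_sq_add_cos_sq x

lemma integral_comp_complAmplitude (hk : k ^ 2 < 1) {f : ℝ → ℝ} (hf : Continuous f) :
    ∫ x in (0 : ℝ)..π / 2, √(1 - k ^ 2) / (1 - k ^ 2 * sin x ^ 2) * f (complAmplitude k x) =
      ∫ x in (0 : ℝ)..π / 2, f x := by
  have hΔ := one_sub_sq_mul_sin_sq_pos hk
  have hsubst := integral_comp_mul_deriv'' (a := 0) (b := π / 2) (g := f)
    (f' := fun x => -√(1 - k ^ 2) / (1 - k ^ 2 * sin x ^ 2))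
    (continuous_complAmplitude hk).continuousOn
    (fun x hx => (hasDerivAt_complAmplitude hk <| by
      rwa [min_eq_left pi_div_two_pos.le, max_eq_right pi_div_two_pos.le] at hx).hasDerivWithinAt)
    (continuous_const.div (by fun_prop) fun x => (hΔ x).ne').continuousOn hf.continuousOn
  rw [complAmplitude_zero, complAmplitude_pi_div_two, integral_symm 0 (π / 2)] at hsubst
  rw [← neg_neg (∫ x in (0 : ℝ)..π / 2, f x), ← hsubst, ← intervalIntegral.integral_neg]
  congr 1 with x
  simp only [Function.comp_apply]
  ring

lemma sqrt_div_mul_log_div_sqrt_complAmplitude (hk : k ^ 2 < 1) (x : ℝ) :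
    √(1 - k ^ 2) / (1 - k ^ 2 * sin x ^ 2) * (log (1 - k ^ 2 * sin (complAmplitude k x) ^ 2) /
      √(1 - k ^ 2 * sin (complAmplitude k x) ^ 2)) =
      log (1 - k ^ 2) * (1 / √(1 - k ^ 2 * sin x ^ 2)) -
        log (1 - k ^ 2 * sin x ^ 2) / √(1 - k ^ 2 * sin x ^ 2) := by
  have hΔ := one_sub_sq_mul_sin_sq_pos hk x
  have hD := sqrt_pos.mpr hΔ
  have hD2 := sq_sqrt hΔ.le
  have hc : 0 < √(1 - k ^ 2) := sqrt_pos.mpr (by linarith)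
  rw [one_sub_sq_mul_sin_sq_complAmplitude hk, log_div (by linarith) hΔ.ne', sqrt_div' _ hΔ.le]
  generalize log (1 - k ^ 2 * sin x ^ 2) = L
  generalize √(1 - k ^ 2 * sin x ^ 2) = D at *
  rw [← hD2]
  field_simp

end ComplementaryAmplitude

theorem stmt_18 (k : ℝ) (hk0 : 0 < k) (hk1 : k < 1) :
    ∫ x in (0:ℝ)..(Real.pi / 2),
        Real.log (1 - k ^ 2 * Real.sin x ^ 2) / Real.sqrt (1 - k ^ 2 * Real.sin x ^ 2) =
      (∫ t in (0:ℝ)..(Real.pi / 2), 1 / Real.sqrt (1 - k ^ 2 * Real.sin t ^ 2)) *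
        Real.log (Real.sqrt (1 - k ^ 2)) := by
  have hk : k ^ 2 < 1 := by nlinarith
  have hΔ := one_sub_sq_mul_sin_sq_pos hk
  have hsqrt_cont : Continuous fun x => √(1 - k ^ 2 * sin x ^ 2) := by fun_prop
  have hsqrt_ne (x : ℝ) : √(1 - k ^ 2 * sin x ^ 2) ≠ 0 := (sqrt_pos.mpr (hΔ x)).ne'
  set f : ℝ → ℝ := fun x => log (1 - k ^ 2 * sin x ^ 2) / √(1 - k ^ 2 * sin x ^ 2)
  set K := ∫ t in (0:ℝ)..π / 2, 1 / √(1 - k ^ 2 * sin t ^ 2)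
  have hf_cont : Continuous f :=
    (Continuous.log (by fun_prop) fun x => (hΔ x).ne').div hsqrt_cont hsqrt_ne
  have hK_cont : Continuous fun x => 1 / √(1 - k ^ 2 * sin x ^ 2) :=
    continuous_const.div hsqrt_cont hsqrt_ne
  have hI : ∫ x in (0:ℝ)..π / 2, f x = log (1 - k ^ 2) * K - ∫ x in (0:ℝ)..π / 2, f x := by
    conv_lhs => rw [← integral_comp_complAmplitude hk hf_cont]
    rw [integral_congr fun x _ => sqrt_div_mul_log_div_sqrt_complAmplitude hk x, integral_sub
      ((hK_cont.intervalIntegrable _ _).const_mul _) (hf_cont.intervalIntegrable _ _),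
      integral_const_mul]
  rw [log_sqrt (by linarith)]
  linarith
end

section
/- For every real k with 0 < k² < 1, letting k' = sqrt(1-k²), the integral ∫₀^{π/2} x·sin(x)·cos(x)/sqrt(1 - k²·sin²x) dx equals -π·k'/(2k²) + E(k)/k². -/
/-! Integrate by parts with `u = x` and `v = -√(1 - k² sin² x) / k²`, whose derivative is
`sin x cos x / √(1 - k² sin² x)`. The boundary term at `π/2` gives `-π k' / (2k²)` and the
remaining integral is `E(k) / k²`. -/

open Real

section

variable {c : ℝ}

lemma one_sub_mul_sin_sq_pos (hc : c < 1) (x : ℝ) : 0 < 1 - c * sin x ^ 2 := by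
  rcases le_or_gt c 0 with hc0 | hc0
  · nlinarith [sq_nonneg (sin x)]
  · nlinarith [sin_sq_le_one x]

lemma hasDerivAt_sqrt_one_sub_mul_sin_sq (hc : c < 1) (x : ℝ) :
    HasDerivAt (fun x => √(1 - c * sin x ^ 2))
      (-(c * (sin x * cos x / √(1 - c * sin x ^ 2)))) x := by
  have hinner : HasDerivAt (fun x => 1 - c * sin x ^ 2) (-(c * (2 * sin x * cos x))) x := by
    simpa [mul_comm, mul_left_comm] using ((hasDerivAt_sin x).pow 2 |>.const_mul c).const_sub 1
  refine (hinner.sqrt (one_sub_mul_sin_sq_pos hc x).ne').congr_deriv ?_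
  have := (sqrt_pos.2 (one_sub_mul_sin_sq_pos hc x)).ne'
  field_simp

lemma integral_id_mul_sin_mul_cos_div_sqrt (hc0 : c ≠ 0) (hc : c < 1) (a b : ℝ) :
    ∫ x in a..b, x * (sin x * cos x / √(1 - c * sin x ^ 2)) =
      (a * √(1 - c * sin a ^ 2) - b * √(1 - c * sin b ^ 2) +
        ∫ x in a..b, √(1 - c * sin x ^ 2)) / c := by
  have hv : ∀ x, HasDerivAt (fun x => -√(1 - c * sin x ^ 2) / c)
      (sin x * cos x / √(1 - c * sin x ^ 2)) x := fun x =>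
    ((hasDerivAt_sqrt_one_sub_mul_sin_sq hc x).fun_neg.div_const c).congr_deriv
      (by field_simp)
  have hv'_cont : Continuous fun x => sin x * cos x / √(1 - c * sin x ^ 2) :=
    (continuous_sin.mul continuous_cos).div (by fun_prop)
      fun x => (sqrt_pos.2 (one_sub_mul_sin_sq_pos hc x)).ne'
  rw [intervalIntegral.integral_mul_deriv_eq_deriv_mul (fun x _ => hasDerivAt_id' x)
    (fun x _ => hv x) intervalIntegrable_const (hv'_cont.intervalIntegrable a b)]
  simp only [one_mul, intervalIntegral.integral_div, intervalIntegral.integral_neg]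
  field_simp
  ring

end

theorem stmt_19 (k : ℝ) (hk0 : 0 < k ^ 2) (hk1 : k ^ 2 < 1) :
    ∫ x in (0:ℝ)..(Real.pi / 2),
        x * Real.sin x * Real.cos x / Real.sqrt (1 - k ^ 2 * Real.sin x ^ 2) =
      -(Real.pi * Real.sqrt (1 - k ^ 2)) / (2 * k ^ 2) +
        (∫ t in (0:ℝ)..(Real.pi / 2), Real.sqrt (1 - k ^ 2 * Real.sin t ^ 2)) / k ^ 2 := by
  have hassoc : ∀ x : ℝ, x * sin x * cos x / √(1 - k ^ 2 * sin x ^ 2) =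
      x * (sin x * cos x / √(1 - k ^ 2 * sin x ^ 2)) := fun x => by ring
  simp_rw [hassoc, integral_id_mul_sin_mul_cos_div_sqrt hk0.ne' hk1, sin_zero, sin_pi_div_two]
  field_simp
  ring
end
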